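/- arXiv:math/0703553 — 5 statements merged into one kernel-verified Lean document; each statement's English description precedes it below -/
import Mathlib

section
/- Let m be a nonzero cube-free integer, let E be the elliptic curve y^2 = x^3 - 432m^2 over ℚ, let p be a prime with p > 3, and let Q ∈ E(ℚ) be a point of infinite order with ord_p(x(Q)) > 0. Then for every integer k ≥ 1 coprime to 3, ord_p(x(kQ)) = ord_p(x(Q)) + ord_p(k). -/
open WeierstrassCurve

/-- The Mordell curve `y² = x³ - 432·m²` as an affine Weierstrass curve over `ℚ`. -/
noncomputable def Mordell (m : ℤ) : WeierstrassCurve.Affine ℚ :=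
  { a₁ := 0, a₂ := 0, a₃ := 0, a₄ := 0, a₆ := -432 * (m : ℚ) ^ 2 }

/-- An integer is cube-free if the only cubes dividing it are units. -/
def CubeFree (m : ℤ) : Prop := ∀ d : ℤ, d ^ 3 ∣ m → IsUnit d

/-- `d` is a primitive divisor of the `n`-th term of the sequence `S`: `d > 1`, `d ∣ S n`,
and `d` is coprime to every earlier nonzero term. -/
def IsPrimitiveDivisor (S : ℕ → ℤ) (n : ℕ) (d : ℤ) : Prop :=
  1 < d ∧ d ∣ S n ∧ ∀ k : ℕ, 1 ≤ k → k < n → S k ≠ 0 → Int.gcd d (S k) = 1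

/-- The x-coordinate of an affine point (junk value `0` at the point at infinity). -/
noncomputable def xCoord {m : ℤ} : (Mordell m).Point → ℚ
  | .zero => 0
  | @WeierstrassCurve.Affine.Point.some _ _ _ x _ _ => x

namespace MordellAux

def Dq (x₁ y₁ : ℚ) : ℚ := x₁^4/(8*y₁^2)
def delq (x₁ y₁ sg xx : ℚ) (n : ℕ) : ℚ := sg*xx - (n:ℚ)*x₁ - Dq x₁ y₁ * (sg*(n:ℚ)^4 - (n:ℚ))
def lamq (a a' b b' : ℚ) : ℚ := (a^2+a*a'+a'^2)/(b+b')
def xq (a a' b b' : ℚ) : ℚ := lamq a a' b b' ^2 - a - a'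
def yq (a a' b b' : ℚ) : ℚ := -(lamq a a' b b' * (xq a a' b b' - a) + b)

/-- class sign of the k-th multiple. -/
def sgn3 (k : ℕ) : ℚ := if k % 3 = 1 then 1 else -1

variable {p : ℕ} [hp : Fact p.Prime]

local notation "π" => (p : ℚ)

lemma one_lt_pi : (1:ℚ) < π := by exact_mod_cast hp.out.one_lt
lemma pi_pos : (0:ℚ) < π := lt_trans one_pos one_lt_pi
lemma zpow_pos' (u : ℤ) : (0:ℚ) < π ^ u := zpow_pos pi_pos u
lemma zpow_le_zpow' {u v : ℤ} (h : u ≤ v) : π ^ u ≤ π ^ v :=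
  (zpow_le_zpow_iff_right₀ one_lt_pi).2 h
lemma zpow_lt_zpow' {u v : ℤ} (h : u < v) : π ^ u < π ^ v :=
  (zpow_lt_zpow_iff_right₀ one_lt_pi).2 h

lemma nmul_le {a b : ℚ} {u v : ℤ} (ha : padicNorm p a ≤ π ^ u) (hb : padicNorm p b ≤ π ^ v) :
    padicNorm p (a * b) ≤ π ^ (u + v) := by
  rw [padicNorm.mul, zpow_add₀ (ne_of_gt pi_pos)]
  exact mul_le_mul ha hb (padicNorm.nonneg b) (le_of_lt (zpow_pos' u))

lemma nmul_eq {a b : ℚ} {u v : ℤ} (ha : padicNorm p a = π ^ u) (hb : padicNorm p b = π ^ v) :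
    padicNorm p (a * b) = π ^ (u + v) := by
  rw [padicNorm.mul, zpow_add₀ (ne_of_gt pi_pos), ha, hb]

lemma nadd_le {a b B : ℚ} (ha : padicNorm p a ≤ B) (hb : padicNorm p b ≤ B) :
    padicNorm p (a + b) ≤ B :=
  le_trans padicNorm.nonarchimedean (max_le ha hb)

lemma nsub_le {a b B : ℚ} (ha : padicNorm p a ≤ B) (hb : padicNorm p b ≤ B) :
    padicNorm p (a - b) ≤ B := by
  rw [sub_eq_add_neg]; exact nadd_le ha (by rwa [padicNorm.neg])

lemma nadd_eq {a b : ℚ} (h : padicNorm p b < padicNorm p a) :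
    padicNorm p (a + b) = padicNorm p a := by
  rw [add_comm, padicNorm.add_eq_max_of_ne (ne_of_lt h)]
  exact max_eq_right (le_of_lt h)

lemma ndom {x main B : ℚ} (hmain : padicNorm p main = B)
    (herr : padicNorm p (x - main) < B) : padicNorm p x = B := by
  have h2 : padicNorm p (main + (x - main)) = padicNorm p main := nadd_eq (by rwa [hmain])
  rw [add_sub_cancel] at h2
  rw [h2, hmain]

lemma npow_nat (a : ℚ) (n : ℕ) : padicNorm p (a ^ n) = padicNorm p a ^ n := by
  induction n with
  | zero => simp [padicNorm.one]
  | succ n ih => rw [pow_succ, padicNorm.mul, ih, pow_succ]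

lemma npow_eq {a : ℚ} {u : ℤ} (h : padicNorm p a = π ^ u) (n : ℕ) :
    padicNorm p (a ^ n) = π ^ (u * n) := by
  rw [npow_nat, h, ← zpow_natCast (π ^ u), ← zpow_mul]

lemma npow_le {a : ℚ} {u : ℤ} (h : padicNorm p a ≤ π ^ u) (n : ℕ) :
    padicNorm p (a ^ n) ≤ π ^ (u * n) := by
  calc padicNorm p (a^n) = padicNorm p a ^ n := npow_nat a n
    _ ≤ (π^u)^n := pow_le_pow_left₀ (padicNorm.nonneg a) h n
    _ = π^(u*n) := by rw [← zpow_natCast (π ^ u), ← zpow_mul]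

lemma nnat_le (n : ℕ) : padicNorm p (n : ℚ) ≤ 1 := padicNorm.of_nat n

lemma nnat_le' (n : ℕ) : padicNorm p (n : ℚ) ≤ π ^ (0:ℤ) := by
  rw [zpow_zero]; exact padicNorm.of_nat n

lemma nexact {q : ℚ} {s : ℤ} (hq : q ≠ 0) (h : padicNorm p q = π ^ (-s)) :
    padicValRat p q = s := by
  have h2 := padicNorm.eq_zpow_of_nonzero (p := p) hq
  rw [h] at h2
  have := (zpow_right_injective₀ pi_pos (ne_of_gt one_lt_pi)).eq_iff.mp h2.symm
  omega

omit hp in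
lemma nval {q : ℚ} (hq : q ≠ 0) : padicNorm p q = π ^ (-padicValRat p q) :=
  padicNorm.eq_zpow_of_nonzero hq

lemma nonzero_of_norm {q : ℚ} {s : ℤ} (h : padicNorm p q = π ^ (s)) : q ≠ 0 := by
  intro h0
  rw [h0, padicNorm.zero] at h
  exact absurd h.symm (ne_of_gt (zpow_pos' _))

lemma ndiv_le {a b : ℚ} {u v : ℤ} (ha : padicNorm p a ≤ π ^ u) (hb : padicNorm p b = π ^ v) :
    padicNorm p (a / b) ≤ π ^ (u - v) := by
  rw [padicNorm.div, hb, div_le_iff₀ (zpow_pos' v), ← zpow_add₀ (ne_of_gt pi_pos)]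
  rw [show u - v + v = u by ring]
  exact ha

lemma nexp_congr {q : ℚ} {u v : ℤ} (h : padicNorm p q = π ^ u) (huv : u = v) :
    padicNorm p q = π ^ v := by rw [h, huv]

lemma nint_one {n : ℤ} (h : ¬ (p:ℤ) ∣ n) : padicNorm p (n : ℚ) = 1 :=
  (padicNorm.int_eq_one_iff n).2 h

lemma n2 (hp3 : 3 < p) : padicNorm p (2:ℚ) = 1 := by
  rw [show (2:ℚ) = ((2:ℤ):ℚ) by norm_num]
  apply nint_one
  intro h
  have := Int.le_of_dvd (by norm_num) h
  omega

lemma n4 (hp3 : 3 < p) : padicNorm p (4:ℚ) = 1 := by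
  rw [show (4:ℚ) = 2^2 by norm_num, npow_nat, n2 hp3, one_pow]

lemma n8 (hp3 : 3 < p) : padicNorm p (8:ℚ) = 1 := by
  rw [show (8:ℚ) = 2^3 by norm_num, npow_nat, n2 hp3, one_pow]

lemma n2' (hp3 : 3 < p) : padicNorm p (2:ℚ) = π ^ (0:ℤ) := by rw [zpow_zero]; exact n2 hp3
lemma n4' (hp3 : 3 < p) : padicNorm p (4:ℚ) = π ^ (0:ℤ) := by rw [zpow_zero]; exact n4 hp3
lemma n8' (hp3 : 3 < p) : padicNorm p (8:ℚ) = π ^ (0:ℤ) := by rw [zpow_zero]; exact n8 hp3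


lemma n3 (hp3 : 3 < p) : padicNorm p (3:ℚ) = 1 := by
  rw [show (3:ℚ) = ((3:ℤ):ℚ) by norm_num]
  apply nint_one
  intro h
  have := Int.le_of_dvd (by norm_num) h
  omega

lemma n432 (hp3 : 3 < p) : padicNorm p (432:ℚ) = 1 := by
  rw [show (432:ℚ) = 2^4*3^3 by norm_num, padicNorm.mul, npow_nat, npow_nat, n2 hp3, n3 hp3]
  norm_num

lemma sgn3_or (k : ℕ) : sgn3 k = 1 ∨ sgn3 k = -1 := by unfold sgn3; split <;> simp

lemma sgn3_norm (k : ℕ) : padicNorm p (sgn3 k) = 1 := by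
  rcases sgn3_or k with h|h
  · rw [h, padicNorm.one]
  · rw [h, show ((-1:ℚ)) = -(1:ℚ) by norm_num, padicNorm.neg, padicNorm.one]

lemma sgn3_sq (k : ℕ) : sgn3 k ^ 2 = 1 := by rcases sgn3_or k with h|h <;> rw [h] <;> norm_num

/-- The levels lemma: a rational point with `v(x) ≥ 1` on `y² = x³ + c` with `v(c) = 2t`,
`t ≤ 2`, has `v(y) = t` and `2t < 3·v(x)`. -/
lemma levels (hp3 : 3 < p) {t α : ℕ} (ht2 : t ≤ 2) {c x y : ℚ}
    (hc : padicNorm p c = π ^ (-(2*(t:ℤ))))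
    (heq : y^2 = x^3 + c)
    (hx : padicNorm p x = π ^ (-(α:ℤ))) (hα : 1 ≤ α) :
    padicNorm p y = π ^ (-(t:ℤ)) ∧ 2*t < 3*α := by
  have hx3 : padicNorm p (x^3) = π ^ (-(α:ℤ)*3) := npow_eq hx 3
  have key : ∀ s : ℤ, padicNorm p (y^2) = π ^ s → ∃ v : ℤ, s = 2*v := by
    intro s hs
    have hy0 : y ≠ 0 := by
      intro h0
      rw [h0] at hs
      simp only [ne_eq, OfNat.ofNat_ne_zero, not_false_eq_true, zero_pow, padicNorm.zero] at hs
      exact absurd hs.symm (ne_of_gt (zpow_pos' _))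
    have := npow_eq (p := p) (nval (p := p) hy0) 2
    rw [hs] at this
    have h2 := (zpow_right_injective₀ pi_pos (ne_of_gt one_lt_pi)).eq_iff.mp this
    exact ⟨-padicValRat p y, by omega⟩
  have h3 : 2*t < 3*α := by
    by_contra hcon
    have hα1 : α = 1 ∧ t = 2 := by omega
    obtain ⟨rfl, rfl⟩ := hα1
    have hlt : padicNorm p c < padicNorm p (x^3) := by
      rw [hx3, hc]
      exact zpow_lt_zpow' (by norm_num)
    have hs : padicNorm p (y^2) = π ^ (-(1:ℤ)*3) := by
      rw [heq, nadd_eq hlt]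
      rw [hx3]
      norm_num
    obtain ⟨v, hv⟩ := key _ hs
    omega
  have hlt : padicNorm p (x^3) < padicNorm p c := by
    rw [hx3, hc]
    exact zpow_lt_zpow' (by push_cast; omega)
  have hs : padicNorm p (y^2) = π ^ (-(2*(t:ℤ))) := by
    rw [heq, add_comm, nadd_eq hlt, hc]
  have hy0 : y ≠ 0 := by
    intro h0
    rw [h0] at hs
    simp only [ne_eq, OfNat.ofNat_ne_zero, not_false_eq_true, zero_pow, padicNorm.zero] at hs
    exact absurd hs.symm (ne_of_gt (zpow_pos' _))
  have := npow_eq (p := p) (nval (p := p) hy0) 2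
  rw [hs] at this
  have h2 := (zpow_right_injective₀ pi_pos (ne_of_gt one_lt_pi)).eq_iff.mp this
  have hvt : padicValRat p y = t := by omega
  exact ⟨by rw [nval hy0, hvt], h3⟩

/-- norm of the coefficient `D`. -/
lemma nDq (hp3 : 3 < p) {t α : ℕ} {x₁ y₁ : ℚ}
    (hx₁ : padicNorm p x₁ = π ^ (-(α:ℤ))) (hy₁ : padicNorm p y₁ = π ^ (-(t:ℤ))) :
    padicNorm p (Dq x₁ y₁) = π ^ (2*(t:ℤ) - 4*α) := by
  rw [Dq, padicNorm.div, npow_eq hx₁ 4, padicNorm.mul, n8 hp3,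
    npow_eq hy₁ 2, one_mul, ← zpow_sub₀ (ne_of_gt pi_pos)]
  congr 1; push_cast; ring

/-- Extraction: exact valuation of `x(kP)` from the invariant. -/
lemma extract (hp3 : 3 < p) {t α : ℕ} (hα : 1 ≤ α) (h3 : 2*t < 3*α)
    {x₁ y₁ x : ℚ} {k : ℕ} (hk1 : 1 ≤ k)
    (he : (padicValNat p k : ℤ) < 6*(α:ℤ) - 4*t)
    (hx₁ : padicNorm p x₁ = π ^ (-(α:ℤ)))
    (hy₁ : padicNorm p y₁ = π ^ (-(t:ℤ)))
    (B2 : padicNorm p (delq x₁ y₁ (sgn3 k) x k) ≤ π ^ (4*(t:ℤ)-7*α)) :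
    padicNorm p x = π ^ (-((α:ℤ) + padicValNat p k)) := by
  have hk0 : (k:ℚ) ≠ 0 := by exact_mod_cast (by omega : k ≠ 0)
  have hkn : padicNorm p (k:ℚ) = π ^ (-(padicValNat p k:ℤ)) := by
    rw [nval hk0, padicValRat.of_nat]
  have hxθ : padicNorm p x = padicNorm p (sgn3 k * x) := by
    rw [padicNorm.mul, sgn3_norm, one_mul]
  rw [hxθ]
  apply ndom (main := (k:ℚ)*x₁)
  · exact nexp_congr (nmul_eq hkn hx₁) (by ring)
  · have hid : sgn3 k * x - (k:ℚ)*x₁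
        = Dq x₁ y₁ * (sgn3 k*(k:ℚ)^4 - (k:ℚ)) + delq x₁ y₁ (sgn3 k) x k := by
      rw [delq]; ring
    rw [hid]
    apply lt_of_le_of_lt padicNorm.nonarchimedean
    apply max_lt
    · have hmu : padicNorm p (sgn3 k*(k:ℚ)^4 - (k:ℚ)) ≤ π ^ (-(padicValNat p k:ℤ) + 0) := by
        rw [show sgn3 k*(k:ℚ)^4 - (k:ℚ) = (k:ℚ)*(sgn3 k*(k:ℚ)^3 - 1) by ring]
        apply nmul_le (le_of_eq hkn)
        apply nsub_le
        · rw [padicNorm.mul, sgn3_norm, one_mul, zpow_zero, npow_nat]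
          exact pow_le_one₀ (padicNorm.nonneg _) (nnat_le k)
        · rw [padicNorm.one, zpow_zero]
      calc padicNorm p _ ≤ π ^ ((2*(t:ℤ) - 4*α) + (-(padicValNat p k:ℤ) + 0)) :=
            nmul_le (le_of_eq (nDq hp3 hx₁ hy₁)) hmu
        _ < π ^ (-((α:ℤ) + padicValNat p k)) := zpow_lt_zpow' (by omega)
    · exact lt_of_le_of_lt B2 (zpow_lt_zpow' (by omega))

/-- The core valuation step: adding two "near-T, same class" points. -/
lemma core (hp3 : 3 < p) (t α : ℕ) (hα : 1 ≤ α) (h3 : 2*t < 3*α)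
    (x₁ y₁ a b a' b' sg : ℚ) (j j' : ℕ)
    (hsg : sg = 1 ∨ sg = -1)
    (hx₁ : padicNorm p x₁ = π ^ (-(α:ℤ)))
    (hy₁ : padicNorm p y₁ = π ^ (-(t:ℤ)))
    (B1 : padicNorm p a ≤ π ^ (-(α:ℤ)))
    (B1' : padicNorm p a' ≤ π ^ (-(α:ℤ)))
    (B2 : padicNorm p (delq x₁ y₁ sg a j) ≤ π ^ (4*(t:ℤ) - 7*α))
    (B2' : padicNorm p (delq x₁ y₁ sg a' j') ≤ π ^ (4*(t:ℤ) - 7*α))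
    (B3 : padicNorm p (b - sg*y₁) ≤ π ^ ((t:ℤ) - 3*α))
    (B3' : padicNorm p (b' - sg*y₁) ≤ π ^ ((t:ℤ) - 3*α)) :
    padicNorm p (b + b') = π ^ (-(t:ℤ)) ∧
    padicNorm p (xq a a' b b') ≤ π ^ (-(α:ℤ)) ∧
    padicNorm p (delq x₁ y₁ (-sg) (xq a a' b b') (j + j')) ≤ π ^ (4*(t:ℤ) - 7*α) ∧
    padicNorm p (yq a a' b b' - (-sg)*y₁) ≤ π ^ ((t:ℤ) - 3*α) := by
  have hsg2 : sg^2 = 1 := by rcases hsg with h|h <;> simp [h]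
  have hsgn : padicNorm p sg = 1 := by
    rcases hsg with h|h
    · simp [h, padicNorm.one]
    · rw [h, padicNorm.neg, padicNorm.one]
  have hnsgn : padicNorm p (-sg) = 1 := by rw [padicNorm.neg, hsgn]
  have hy₁0 : y₁ ≠ 0 := nonzero_of_norm hy₁
  have hDn : padicNorm p (Dq x₁ y₁) = π ^ (2*(t:ℤ) - 4*α) := by
    rw [Dq, padicNorm.div, npow_eq hx₁ 4, padicNorm.mul, n8 hp3,
      npow_eq hy₁ 2, one_mul, ← zpow_sub₀ (ne_of_gt pi_pos)]
    congr 1; push_cast; ring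
  have hmu : ∀ n : ℕ, padicNorm p (sg*(n:ℚ)^4 - (n:ℚ)) ≤ π ^ (0:ℤ) := by
    intro n
    apply nsub_le
    · rw [padicNorm.mul, hsgn, one_mul, zpow_zero, npow_nat]
      exact pow_le_one₀ (padicNorm.nonneg _) (nnat_le n)
    · exact nnat_le' n
  -- bound on dⱼ = σ·a - j·x₁
  have hdj : ∀ (xx : ℚ) (n : ℕ), padicNorm p (delq x₁ y₁ sg xx n) ≤ π ^ (4*(t:ℤ) - 7*α) →
      padicNorm p (sg*xx - (n:ℚ)*x₁) ≤ π ^ (2*(t:ℤ) - 4*α) := by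
    intro xx n hB
    have hid : sg*xx - (n:ℚ)*x₁
        = Dq x₁ y₁*(sg*(n:ℚ)^4 - (n:ℚ)) + delq x₁ y₁ sg xx n := by
      rw [delq]; ring
    rw [hid]
    apply nadd_le
    · exact le_trans (nmul_le (le_of_eq hDn) (hmu n)) (zpow_le_zpow' (by omega))
    · exact le_trans hB (zpow_le_zpow' (by omega))
  have hda := hdj a j B2
  have hda' := hdj a' j' B2'
  have hθ : padicNorm p (sg*a) ≤ π ^ (-(α:ℤ)) := by
    rw [padicNorm.mul, hsgn, one_mul]; exact B1
  have hθ' : padicNorm p (sg*a') ≤ π ^ (-(α:ℤ)) := by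
    rw [padicNorm.mul, hsgn, one_mul]; exact B1'
  have hjx : ∀ n : ℕ, padicNorm p ((n:ℚ)*x₁) ≤ π ^ (-(α:ℤ)) := by
    intro n
    exact le_trans (nmul_le (nnat_le' n) (le_of_eq hx₁)) (zpow_le_zpow' (by omega))
  have hSle : padicNorm p ((j:ℚ)^2 + (j:ℚ)*(j':ℚ) + (j':ℚ)^2) ≤ π ^ (0:ℤ) := by
    rw [show (j:ℚ)^2 + (j:ℚ)*(j':ℚ) + (j':ℚ)^2 = ((j^2+j*j'+j'^2 : ℕ):ℚ) by push_cast; ring]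
    exact nnat_le' _
  -- ρ bound
  have hρid : (a^2+a*a'+a'^2) - ((j:ℚ)^2 + (j:ℚ)*(j':ℚ) + (j':ℚ)^2)*x₁^2
      = (sg*a - (j:ℚ)*x₁)*(sg*a + (j:ℚ)*x₁)
        + ((sg*a - (j:ℚ)*x₁)*(sg*a') + (j:ℚ)*x₁*(sg*a' - (j':ℚ)*x₁))
        + (sg*a' - (j':ℚ)*x₁)*(sg*a' + (j':ℚ)*x₁) := by
    linear_combination (-(a^2+a*a'+a'^2)) * hsg2
  have hρn : padicNorm p ((a^2+a*a'+a'^2) - ((j:ℚ)^2 + (j:ℚ)*(j':ℚ) + (j':ℚ)^2)*x₁^2)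
      ≤ π ^ (2*(t:ℤ) - 5*α) := by
    rw [hρid]
    apply nadd_le (nadd_le _ _) _
    · exact le_trans (nmul_le hda (nadd_le hθ (hjx j))) (zpow_le_zpow' (by omega))
    · apply nadd_le
      · exact le_trans (nmul_le hda hθ') (zpow_le_zpow' (by omega))
      · exact le_trans (nmul_le (hjx j) hda') (zpow_le_zpow' (by omega))
    · exact le_trans (nmul_le hda' (nadd_le hθ' (hjx j'))) (zpow_le_zpow' (by omega))
  have hNm : padicNorm p (a^2+a*a'+a'^2) ≤ π ^ (-2*(α:ℤ)) := by
    rw [show a^2+a*a'+a'^2 = ((j:ℚ)^2 + (j:ℚ)*(j':ℚ) + (j':ℚ)^2)*x₁^2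
      + ((a^2+a*a'+a'^2) - ((j:ℚ)^2 + (j:ℚ)*(j':ℚ) + (j':ℚ)^2)*x₁^2) by ring]
    apply nadd_le
    · exact le_trans (nmul_le hSle (npow_le (le_of_eq hx₁) 2)) (zpow_le_zpow' (by omega))
    · exact le_trans hρn (zpow_le_zpow' (by omega))
  -- ε bound
  have hεn : padicNorm p ((b+b') - 2*(sg*y₁)) ≤ π ^ ((t:ℤ) - 3*α) := by
    rw [show (b+b') - 2*(sg*y₁) = (b - sg*y₁) + (b' - sg*y₁) by ring]
    exact nadd_le B3 B3'
  -- C0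
  have C0 : padicNorm p (b+b') = π ^ (-(t:ℤ)) := by
    apply ndom (main := 2*(sg*y₁))
    · rw [padicNorm.mul, n2 hp3, one_mul, padicNorm.mul, hsgn, one_mul, hy₁]
    · exact lt_of_le_of_lt hεn (zpow_lt_zpow' (by omega))
  have hY0 : b+b' ≠ 0 := nonzero_of_norm C0
  -- lambda bounds
  have hlam : padicNorm p (lamq a a' b b') ≤ π ^ ((t:ℤ) - 2*α) := by
    rw [lamq]
    exact le_trans (ndiv_le hNm C0) (zpow_le_zpow' (by omega))
  have hlam2 : padicNorm p (lamq a a' b b' ^ 2) ≤ π ^ (((t:ℤ) - 2*α)*2) := npow_le hlam 2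
  -- C1
  have C1 : padicNorm p (xq a a' b b') ≤ π ^ (-(α:ℤ)) := by
    rw [xq]
    apply nsub_le (nsub_le _ B1) B1'
    exact le_trans hlam2 (zpow_le_zpow' (by omega))
  -- Step 3 : the key estimate on λ² - 2DS²
  have hKid : lamq a a' b b' ^2 - 2*(Dq x₁ y₁)*((j:ℚ)^2 + (j:ℚ)*(j':ℚ) + (j':ℚ)^2)^2
      = (4*y₁^2*(a^2+a*a'+a'^2)^2
          - ((j:ℚ)^2 + (j:ℚ)*(j':ℚ) + (j':ℚ)^2)^2*x₁^4*(b+b')^2)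
        / (4*y₁^2*(b+b')^2) := by
    rw [lamq, Dq]
    field_simp
    ring
  have hnumid : 4*y₁^2*(a^2+a*a'+a'^2)^2
        - ((j:ℚ)^2 + (j:ℚ)*(j':ℚ) + (j':ℚ)^2)^2*x₁^4*(b+b')^2
      = 8*y₁^2*((j:ℚ)^2 + (j:ℚ)*(j':ℚ) + (j':ℚ)^2)*x₁^2
            *((a^2+a*a'+a'^2) - ((j:ℚ)^2 + (j:ℚ)*(j':ℚ) + (j':ℚ)^2)*x₁^2)
        + 4*y₁^2*((a^2+a*a'+a'^2) - ((j:ℚ)^2 + (j:ℚ)*(j':ℚ) + (j':ℚ)^2)*x₁^2)^2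
        - 4*sg*((j:ℚ)^2 + (j:ℚ)*(j':ℚ) + (j':ℚ)^2)^2*x₁^4*y₁*((b+b') - 2*(sg*y₁))
        - ((j:ℚ)^2 + (j:ℚ)*(j':ℚ) + (j':ℚ)^2)^2*x₁^4*((b+b') - 2*(sg*y₁))^2 := by
    linear_combination (-(4*((j:ℚ)^2 + (j:ℚ)*(j':ℚ) + (j':ℚ)^2)^2*x₁^4*y₁^2)) * hsg2
  have hnum : padicNorm p (4*y₁^2*(a^2+a*a'+a'^2)^2
        - ((j:ℚ)^2 + (j:ℚ)*(j':ℚ) + (j':ℚ)^2)^2*x₁^4*(b+b')^2) ≤ π ^ (-7*(α:ℤ)) := by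
    rw [hnumid]
    apply nsub_le (nsub_le (nadd_le _ _) _) _
    · exact le_trans (nmul_le (nmul_le (nmul_le (nmul_le (le_of_eq (n8' hp3))
        (npow_le (le_of_eq hy₁) 2)) hSle) (npow_le (le_of_eq hx₁) 2)) hρn)
        (zpow_le_zpow' (by omega))
    · exact le_trans (nmul_le (nmul_le (le_of_eq (n4' hp3)) (npow_le (le_of_eq hy₁) 2))
        (npow_le hρn 2)) (zpow_le_zpow' (by omega))
    · have h4sg : padicNorm p (4*sg) ≤ π ^ (0:ℤ) := by
        rw [padicNorm.mul, n4 hp3, one_mul, hsgn, zpow_zero]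
      exact le_trans (nmul_le (nmul_le (nmul_le (nmul_le h4sg (npow_le hSle 2))
        (npow_le (le_of_eq hx₁) 4)) (le_of_eq hy₁)) hεn) (zpow_le_zpow' (by omega))
    · exact le_trans (nmul_le (nmul_le (npow_le hSle 2) (npow_le (le_of_eq hx₁) 4))
        (npow_le hεn 2)) (zpow_le_zpow' (by omega))
  have hden : padicNorm p (4*y₁^2*(b+b')^2) = π ^ (-(4*(t:ℤ))) := by
    refine nexp_congr (nmul_eq (nmul_eq (n4' hp3) (npow_eq hy₁ 2)) (npow_eq C0 2)) (by ring)
  have hK : padicNorm p (lamq a a' b b' ^2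
      - 2*(Dq x₁ y₁)*((j:ℚ)^2 + (j:ℚ)*(j':ℚ) + (j':ℚ)^2)^2) ≤ π ^ (4*(t:ℤ) - 7*α) := by
    rw [hKid]
    exact le_trans (ndiv_le hnum hden) (zpow_le_zpow' (by omega))
  -- C2
  have hC2id : delq x₁ y₁ (-sg) (xq a a' b b') (j + j')
      = (-sg)*(lamq a a' b b' ^2 - 2*(Dq x₁ y₁)*((j:ℚ)^2 + (j:ℚ)*(j':ℚ) + (j':ℚ)^2)^2)
        + delq x₁ y₁ sg a j + delq x₁ y₁ sg a' j' := by
    rw [delq, delq, delq, xq]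
    push_cast
    ring
  have C2 : padicNorm p (delq x₁ y₁ (-sg) (xq a a' b b') (j + j')) ≤ π ^ (4*(t:ℤ) - 7*α) := by
    rw [hC2id]
    apply nadd_le (nadd_le _ B2) B2'
    rw [padicNorm.mul, hnsgn, one_mul]
    exact hK
  -- C3
  have hC3id : yq a a' b b' - (-sg)*y₁
      = -(lamq a a' b b' * (xq a a' b b' - a)) - (b - sg*y₁) := by
    rw [yq]; ring
  have C3 : padicNorm p (yq a a' b b' - (-sg)*y₁) ≤ π ^ ((t:ℤ) - 3*α) := by
    rw [hC3id]
    apply nsub_le _ B3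
    rw [padicNorm.neg]
    exact le_trans (nmul_le hlam (nsub_le C1 B1)) (zpow_le_zpow' (by omega))
  exact ⟨C0, C1, C2, C3⟩


end MordellAux

section Bridge

open MordellAux WeierstrassCurve.Affine

lemma mordell_equation {m : ℤ} {x y : ℚ} (h : (Mordell m).Nonsingular x y) :
    y^2 = x^3 + (-432*(m:ℚ)^2) := by
  have e := (WeierstrassCurve.Affine.equation_iff (W := Mordell m) x y).1 h.1
  rw [show (Mordell m).a₁ = 0 from rfl, show (Mordell m).a₂ = 0 from rfl,
    show (Mordell m).a₃ = 0 from rfl, show (Mordell m).a₄ = 0 from rfl,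
    show (Mordell m).a₆ = -432*(m:ℚ)^2 from rfl] at e
  linear_combination e

lemma mordell_negY {m : ℤ} (x y : ℚ) : (Mordell m).negY x y = -y := by
  rw [WeierstrassCurve.Affine.negY, show (Mordell m).a₁ = 0 from rfl,
    show (Mordell m).a₃ = 0 from rfl]
  ring

lemma add_formula {m : ℤ} {xa ya xb yb : ℚ} (ha : (Mordell m).Nonsingular xa ya)
    (hb : (Mordell m).Nonsingular xb yb) (hY : ya + yb ≠ 0) :
    ∃ (x3 y3 : ℚ) (hc : (Mordell m).Nonsingular x3 y3),
      WeierstrassCurve.Affine.Point.some _ _ ha + WeierstrassCurve.Affine.Point.some _ _ hb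
        = WeierstrassCurve.Affine.Point.some _ _ hc ∧
      x3 = xq xa xb ya yb ∧ y3 = yq xa xb ya yb := by
  have ea := mordell_equation ha
  have eb := mordell_equation hb
  have hxy : xa = xb → ya ≠ (Mordell m).negY xb yb := by
    intro _ hcon
    rw [mordell_negY] at hcon
    exact hY (by rw [hcon]; ring)
  have hadd := WeierstrassCurve.Affine.Point.add_some (h₁ := ha) (h₂ := hb) (fun h => hxy h.1 h.2)
  have hs : (Mordell m).slope xa xb ya yb = lamq xa xb ya yb := by
    by_cases hx : xa = xb
    · have hyy : ya = yb := by
        have h2 : (ya - yb)*(ya + yb) = 0 := by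
          subst hx
          linear_combination ea - eb
        rcases mul_eq_zero.1 h2 with h|h
        · linarith [sub_eq_zero.1 h]
        · exact absurd h hY
      rw [WeierstrassCurve.Affine.slope_of_Y_ne hx (hxy hx), mordell_negY,
        show (Mordell m).a₁ = 0 from rfl, show (Mordell m).a₂ = 0 from rfl,
        show (Mordell m).a₄ = 0 from rfl, lamq]
      subst hx; subst hyy
      rw [div_eq_div_iff (by intro hcon; apply hY; linarith) hY]
      ring
    · rw [WeierstrassCurve.Affine.slope_of_X_ne hx, lamq,
        div_eq_div_iff (sub_ne_zero.2 hx) hY]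
      linear_combination ea - eb
  refine ⟨_, _, WeierstrassCurve.Affine.nonsingular_add ha hb (fun h => hxy h.1 h.2), hadd, ?_, ?_⟩
  · rw [WeierstrassCurve.Affine.addX, hs, show (Mordell m).a₁ = 0 from rfl,
      show (Mordell m).a₂ = 0 from rfl, xq]
    ring
  · rw [WeierstrassCurve.Affine.addY, WeierstrassCurve.Affine.negAddY, mordell_negY,
      WeierstrassCurve.Affine.addX, hs, show (Mordell m).a₁ = 0 from rfl,
      show (Mordell m).a₂ = 0 from rfl, yq, xq]
    ring

end Bridge

section MainInd

open MordellAux WeierstrassCurve.Affine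

variable {p : ℕ} [hp : Fact p.Prime]

local notation "π" => (p : ℚ)

/-- The induction invariant for the k-th multiple of a near-torsion point. -/
def MInv (p t α : ℕ) (m : ℤ) (x₁ y₁ : ℚ) (P : (Mordell m).Point) (k : ℕ) : Prop :=
  ∃ (x y : ℚ) (h : (Mordell m).Nonsingular x y),
    k • P = WeierstrassCurve.Affine.Point.some _ _ h ∧
    padicNorm p x ≤ (p:ℚ) ^ (-(α:ℤ)) ∧
    padicNorm p (delq x₁ y₁ (sgn3 k) x k) ≤ (p:ℚ) ^ (4*(t:ℤ) - 7*α) ∧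
    padicNorm p (y - sgn3 k * y₁) ≤ (p:ℚ) ^ ((t:ℤ) - 3*α)

theorem main_ind (hp3 : 3 < p) {t α : ℕ} (hα : 1 ≤ α) (h3 : 2*t < 3*α)
    {m : ℤ} {x₁ y₁ : ℚ} (h₁ : (Mordell m).Nonsingular x₁ y₁)
    (hx₁ : padicNorm p x₁ = π ^ (-(α:ℤ))) (hy₁ : padicNorm p y₁ = π ^ (-(t:ℤ))) :
    ∀ k, 1 ≤ k → k % 3 ≠ 0 → MInv p t α m x₁ y₁ (.some _ _ h₁) k := by
  intro k
  induction k using Nat.strong_induction_on with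
  | _ k IH =>
    intro hk1 hk3
    by_cases hk : k = 1
    · subst hk
      refine ⟨x₁, y₁, h₁, by rw [one_nsmul], le_of_eq hx₁, ?_, ?_⟩
      · have h0 : delq x₁ y₁ (sgn3 1) x₁ 1 = 0 := by unfold delq sgn3; norm_num
        rw [h0, padicNorm.zero]
        exact le_of_lt (zpow_pos' _)
      · have h0 : y₁ - sgn3 1 * y₁ = 0 := by unfold sgn3; norm_num
        rw [h0, padicNorm.zero]
        exact le_of_lt (zpow_pos' _)
    · obtain ⟨j, j', hsum, hj1, hj'1, hjlt, hj'lt, hj3, hjj'⟩ :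
          ∃ j j', j + j' = k ∧ 1 ≤ j ∧ 1 ≤ j' ∧ j < k ∧ j' < k ∧ j % 3 ≠ 0 ∧ j % 3 = j' % 3 := by
        rcases (by omega : k % 3 = 1 ∨ k % 3 = 2) with h|h
        · exact ⟨k-2, 2, by omega, by omega, by omega, by omega, by omega, by omega, by omega⟩
        · exact ⟨k-1, 1, by omega, by omega, by omega, by omega, by omega, by omega, by omega⟩
      have hj'3 : j' % 3 ≠ 0 := by omega
      obtain ⟨a, b, hnsa, hsmulj, Bj1, Bj2, Bj3⟩ := IH j hjlt hj1 hj3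
      obtain ⟨a', b', hnsa', hsmulj', Bj'1, Bj'2, Bj'3⟩ := IH j' hj'lt hj'1 hj'3
      have hsq : sgn3 j' = sgn3 j := by unfold sgn3; rw [hjj']
      have hsqk : sgn3 k = -(sgn3 j) := by
        rcases (by omega : j % 3 = 1 ∨ j % 3 = 2) with h|h
        · have h2 : k % 3 = 2 := by omega
          simp [sgn3, h, h2]
        · have h2 : k % 3 = 1 := by omega
          simp [sgn3, h, h2]
      rw [hsq] at Bj'2 Bj'3
      obtain ⟨C0, C1, C2, C3⟩ := core hp3 t α hα h3 x₁ y₁ a b a' b' (sgn3 j) j j'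
        (sgn3_or j) hx₁ hy₁ Bj1 Bj'1 Bj2 Bj'2 Bj3 Bj'3
      have hY0 : b + b' ≠ 0 := nonzero_of_norm C0
      obtain ⟨x3, y3, hc, hadd, hx3, hy3⟩ := add_formula hnsa hnsa' hY0
      refine ⟨x3, y3, hc, ?_, ?_, ?_, ?_⟩
      · rw [← hsum, add_nsmul, hsmulj, hsmulj', hadd]
      · rw [hx3]; exact C1
      · rw [hx3, hsqk, ← hsum]; exact C2
      · rw [hy3, hsqk]; exact C3

lemma p_mod3 (hp3 : 3 < p) : p % 3 ≠ 0 := by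
  intro h
  have h3 : 3 ∣ p := Nat.dvd_of_mod_eq_zero h
  rcases (Nat.Prime.eq_one_or_self_of_dvd hp.out 3 h3) with h|h <;> omega

/-- levels rise by one for each multiplication by `p`. -/
theorem grow_pow (hp3 : 3 < p) {t α : ℕ} (hα : 1 ≤ α) (h3 : 2*t < 3*α)
    {m : ℤ} {x₁ y₁ : ℚ} (h₁ : (Mordell m).Nonsingular x₁ y₁)
    (hx₁ : padicNorm p x₁ = π ^ (-(α:ℤ))) (hy₁ : padicNorm p y₁ = π ^ (-(t:ℤ))) :
    ∀ e : ℕ, ∃ (x' y' : ℚ) (h' : (Mordell m).Nonsingular x' y'),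
      (p^e) • (WeierstrassCurve.Affine.Point.some _ _ h₁) = .some _ _ h' ∧
      padicNorm p x' = π ^ (-((α:ℤ)+e)) ∧ padicNorm p y' = π ^ (-(t:ℤ)) := by
  intro e
  induction e with
  | zero =>
    refine ⟨x₁, y₁, h₁, by rw [pow_zero, one_nsmul], ?_, hy₁⟩
    exact nexp_congr hx₁ (by push_cast; omega)
  | succ e ihe =>
    obtain ⟨x', y', h', hPe, hx', hy'⟩ := ihe
    have hα' : 1 ≤ α + e := by omega
    have h3' : 2*t < 3*(α+e) := by omega
    have hx'' : padicNorm p x' = π ^ (-((α+e:ℕ):ℤ)) := nexp_congr hx' (by push_cast; omega)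
    obtain ⟨x2, y2, h2, hsm, B1, B2, B3⟩ :=
      main_ind hp3 hα' h3' h' hx'' hy' p (by omega) (p_mod3 hp3)
    have hvp : padicValNat p p = 1 := padicValNat.self hp.out.one_lt
    have hx2 : padicNorm p x2 = π ^ (-(((α+e:ℕ):ℤ) + padicValNat p p)) :=
      extract hp3 hα' h3' (by omega) (by rw [hvp]; push_cast; omega) hx'' hy' B2
    refine ⟨x2, y2, h2, ?_, ?_, ?_⟩
    · rw [pow_succ, mul_nsmul, hPe, hsm]
    · exact nexp_congr hx2 (by rw [hvp]; push_cast; omega)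
    · apply ndom (main := sgn3 p * y')
      · rw [padicNorm.mul, sgn3_norm, one_mul, hy']
      · exact lt_of_le_of_lt B3 (zpow_lt_zpow' (by push_cast; omega))

end MainInd

theorem ord_of_x_numerator
    (m : ℤ) (hm : m ≠ 0) (hcf : CubeFree m)
    (p : ℕ) (hp : p.Prime) (hp3 : 3 < p)
    (Q : (Mordell m).Point) (hQ : ∀ k : ℕ, 0 < k → k • Q ≠ 0)
    (hord : 0 < padicValRat p (xCoord Q))
    (k : ℕ) (hk : 1 ≤ k) (hk3 : Nat.Coprime k 3) :
    padicValRat p (xCoord (k • Q)) =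
      padicValRat p (xCoord Q) + (padicValNat p k : ℤ) := by
  haveI : Fact p.Prime := ⟨hp⟩
  have hQ1 := hQ 1 one_pos
  rw [one_nsmul] at hQ1
  obtain ⟨x₀, y₀, h₀, rfl⟩ : ∃ x, ∃ y, ∃ h : (Mordell m).Nonsingular x y,
      Q = WeierstrassCurve.Affine.Point.some _ _ h := by
    cases Q with
    | zero => exact absurd rfl hQ1
    | some _ _ h => exact ⟨_, _, h, rfl⟩
  have hxQ : xCoord (WeierstrassCurve.Affine.Point.some _ _ h₀) = x₀ := rfl
  rw [hxQ] at hord ⊢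
  have hx0 : x₀ ≠ 0 := by
    intro h0
    rw [h0, padicValRat.zero] at hord
    exact lt_irrefl 0 hord
  set α : ℕ := (padicValRat p x₀).toNat with hαdef
  have hαa : (α:ℤ) = padicValRat p x₀ := Int.toNat_of_nonneg (le_of_lt hord)
  have hα1 : 1 ≤ α := by omega
  have hx₁ : padicNorm p x₀ = (p:ℚ) ^ (-(α:ℤ)) := by rw [MordellAux.nval hx0, hαa]
  set t : ℕ := padicValNat p m.natAbs with htdef
  have ht2 : t ≤ 2 := by
    by_contra hcon
    have hd1 : p^3 ∣ m.natAbs := dvd_trans (pow_dvd_pow p (by omega)) pow_padicValNat_dvd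
    have hd2 : ((p:ℤ))^3 ∣ ((m.natAbs : ℤ)) := by exact_mod_cast hd1
    have hd3 : ((p:ℤ))^3 ∣ m := dvd_trans hd2 (Int.natAbs_dvd.mpr dvd_rfl)
    have := hcf (p:ℤ) hd3
    rw [Int.isUnit_iff] at this
    have hp3' : (3:ℤ) < p := by exact_mod_cast hp3
    omega
  have hm0 : (m:ℚ) ≠ 0 := by exact_mod_cast hm
  have hmt : padicNorm p (m:ℚ) = (p:ℚ) ^ (-(t:ℤ)) := by
    rw [MordellAux.nval hm0, show ((m:ℤ):ℚ) = ((m:ℤ):ℚ) from rfl, padicValRat.of_int]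
    rfl
  have hc : padicNorm p (-432*(m:ℚ)^2) = (p:ℚ) ^ (-(2*(t:ℤ))) := by
    rw [show -432*(m:ℚ)^2 = -(432*(m:ℚ)^2) by ring, padicNorm.neg, padicNorm.mul,
      MordellAux.n432 hp3, one_mul]
    exact MordellAux.nexp_congr (MordellAux.npow_eq hmt 2) (by push_cast; ring)
  obtain ⟨hy₁, h3⟩ := MordellAux.levels hp3 ht2 hc (mordell_equation h₀) hx₁ hα1
  set e := padicValNat p k with hedef
  obtain ⟨x', y', h', hPe, hx', hy'⟩ := grow_pow hp3 hα1 h3 h₀ hx₁ hy₁ e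
  set k₀ := k / p^e with hk₀def
  have hk₀ : p^e * k₀ = k := Nat.mul_div_cancel' pow_padicValNat_dvd
  have hpk₀ : ¬ p ∣ k₀ := by
    have h0 : k ≠ 0 := by omega
    have := Nat.not_dvd_ordCompl hp h0
    rwa [Nat.factorization_def k hp] at this
  have hk₀1 : 1 ≤ k₀ := by
    rcases Nat.eq_zero_or_pos k₀ with h|h
    · rw [h, mul_zero] at hk₀; omega
    · omega
  have h3k : k % 3 ≠ 0 := by
    intro h
    have h3d : 3 ∣ k := Nat.dvd_of_mod_eq_zero h
    have hg : (3:ℕ) ∣ Nat.gcd k 3 := Nat.dvd_gcd h3d (dvd_refl 3)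
    rw [Nat.Coprime] at hk3
    rw [hk3] at hg
    exact absurd (Nat.le_of_dvd one_pos hg) (by norm_num)
  have hk₀3 : k₀ % 3 ≠ 0 := by
    intro h
    apply h3k
    have hd : (3:ℕ) ∣ k₀ := Nat.dvd_of_mod_eq_zero h
    have hdk : (3:ℕ) ∣ k := dvd_trans hd ⟨p^e, by rw [← hk₀]; ring⟩
    obtain ⟨c, hc'⟩ := hdk
    omega
  have hα' : 1 ≤ α + e := by omega
  have h3' : 2*t < 3*(α+e) := by omega
  have hx'' : padicNorm p x' = (p:ℚ) ^ (-((α+e:ℕ):ℤ)) :=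
    MordellAux.nexp_congr hx' (by push_cast; omega)
  obtain ⟨x2, y2, h2, hsm, B1, B2, B3⟩ := main_ind hp3 hα' h3' h' hx'' hy' k₀ hk₀1 hk₀3
  have hv0 : padicValNat p k₀ = 0 := padicValNat.eq_zero_of_not_dvd hpk₀
  have hx2 : padicNorm p x2 = (p:ℚ) ^ (-(((α+e:ℕ):ℤ) + padicValNat p k₀)) :=
    MordellAux.extract hp3 hα' h3' hk₀1 (by rw [hv0]; push_cast; omega) hx'' hy' B2
  have hkQ : k • (WeierstrassCurve.Affine.Point.some _ _ h₀)
      = WeierstrassCurve.Affine.Point.some _ _ h2 := by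
    rw [← hk₀, mul_nsmul, hPe, hsm]
  rw [hkQ]
  have hx2' : padicNorm p x2 = (p:ℚ) ^ (-((α:ℤ) + e)) :=
    MordellAux.nexp_congr hx2 (by rw [hv0]; push_cast; omega)
  have hfin := MordellAux.nexact (MordellAux.nonzero_of_norm hx2') hx2'
  show padicValRat p x2 = _
  rw [hfin, ← hαa]
end

section
/- Let m be a nonzero integer, let E be the elliptic curve y^2 = x^3 - 432m^2 over ℚ, let p > 3 be a prime with p ∤ m, and let Q ∈ E(ℚ) be a point of infinite order with ord_p(x(Q)) > 0. Then ord_p(x(3Q)) = -2·ord_p(x(Q)). -/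
open WeierstrassCurve

/-- Auxiliary algebraic identity: the x-coordinate of the double. -/
lemma mordell_dx (x y b L₁ x₂ : ℚ)
    (hE : y ^ 2 = x ^ 3 + b)
    (hL1 : L₁ * (2 * y) = 3 * x ^ 2)
    (hx2 : x₂ = L₁ ^ 2 + 0 * L₁ - 0 - x - x) :
    (x₂ - x) * (4 * y ^ 2) = -(3 * x * (x ^ 3 + 4 * b)) ∧
      x₂ * (4 * y ^ 2) = x * (x ^ 3 - 8 * b) := by
  have hx2' : x₂ * (4 * y ^ 2) = x * (x ^ 3 - 8 * b) := by
    rw [hx2]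
    linear_combination (2 * y * L₁ + 3 * x ^ 2) * hL1 + (-8 * x) * hE
  exact ⟨by linear_combination hx2' + (-4 * x) * hE, hx2'⟩

/-- Auxiliary algebraic identity: the (cleared-denominator) x-coordinate of the triple. -/
lemma mordell_big (x y b L₁ x₂ y₂ L₂ x₃ : ℚ)
    (hE : y ^ 2 = x ^ 3 + b)
    (hL1 : L₁ * (2 * y) = 3 * x ^ 2)
    (hx2 : x₂ = L₁ ^ 2 + 0 * L₁ - 0 - x - x)
    (hy2 : y₂ = -(L₁ * (x₂ - x) + y) - 0 * x₂ - 0)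
    (hs2 : L₂ * (x₂ - x) = y₂ - y)
    (hx3 : x₃ = L₂ ^ 2 + 0 * L₂ - 0 - x₂ - x) :
    x₃ * (36 * x ^ 2 * y ^ 2 * (x ^ 3 + 4 * b) ^ 2) =
      4 * (x ^ 3 + b) * (x ^ 9 - 96 * b * x ^ 6 + 48 * b ^ 2 * x ^ 3 + 64 * b ^ 3) := by
  obtain ⟨hdx, hx2'⟩ := mordell_dx x y b L₁ x₂ hE hL1 hx2
  have hy2' : (y₂ - y) * (8 * y ^ 3) = -7 * x ^ 6 + 4 * b * x ^ 3 - 16 * b ^ 2 := by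
    rw [hy2]
    linear_combination (-4 * y ^ 2 * (x₂ - x)) * hL1 + (-3 * x ^ 2) * hdx +
      (-16 * (y ^ 2 + x ^ 3 + b)) * hE
  have e1 : (y₂ - y) ^ 2 * (64 * y ^ 6) = (-7 * x ^ 6 + 4 * b * x ^ 3 - 16 * b ^ 2) ^ 2 := by
    linear_combination ((y₂ - y) * 8 * y ^ 3 + (-7 * x ^ 6 + 4 * b * x ^ 3 - 16 * b ^ 2)) * hy2'
  have e2 : (x₂ - x) ^ 2 * (16 * y ^ 4) = 9 * x ^ 2 * (x ^ 3 + 4 * b) ^ 2 := by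
    linear_combination ((x₂ - x) * 4 * y ^ 2 - 3 * x * (x ^ 3 + 4 * b)) * hdx
  have e3 : L₂ ^ 2 * ((x₂ - x) ^ 2 * (16 * y ^ 4)) * (4 * y ^ 2) =
      (-7 * x ^ 6 + 4 * b * x ^ 3 - 16 * b ^ 2) ^ 2 := by
    linear_combination (64 * y ^ 6 * (L₂ * (x₂ - x) + y₂ - y)) * hs2 + e1
  rw [hx3]
  linear_combination e3 + (-4 * y ^ 2 * L₂ ^ 2) * e2 +
    (-(9 * x ^ 2 * (x ^ 3 + 4 * b) ^ 2)) * hx2' + (-(36 * x ^ 3 * (x ^ 3 + 4 * b) ^ 2)) * hE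

theorem ord_of_x_triple
    (m : ℤ) (hm : m ≠ 0) (p : ℕ) (hp : p.Prime) (hp3 : 3 < p)
    (hpm : ¬ (p : ℤ) ∣ m)
    (Q : (Mordell m).Point) (hQ : ∀ k : ℕ, 0 < k → k • Q ≠ 0)
    (hord : 0 < padicValRat p (xCoord Q)) :
    padicValRat p (xCoord ((3 : ℕ) • Q)) = -2 * padicValRat p (xCoord Q) := by
  haveI : Fact p.Prime := ⟨hp⟩
  obtain _ | @⟨x, y, hns⟩ := Q
  · exfalso
    have h0 : xCoord (m := m) .zero = 0 := rfl
    rw [h0] at hord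
    simp [padicValRat] at hord
  simp only [xCoord] at hord
  have hxq : xCoord (WeierstrassCurve.Affine.Point.some _ _ hns) = x := rfl
  rw [hxq]
  -- basic constants
  set b : ℚ := -432 * (m : ℚ) ^ 2 with hb
  have ha1 : (Mordell m).a₁ = 0 := rfl
  have ha2 : (Mordell m).a₂ = 0 := rfl
  have ha3 : (Mordell m).a₃ = 0 := rfl
  have ha4 : (Mordell m).a₄ = 0 := rfl
  have ha6 : (Mordell m).a₆ = b := rfl
  have hmQ : (m : ℚ) ≠ 0 := Int.cast_ne_zero.mpr hm
  have hx0 : x ≠ 0 := by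
    intro h
    rw [h] at hord
    simp [padicValRat] at hord
  -- the curve equation
  have hE : y ^ 2 = x ^ 3 + b := by
    have h := (WeierstrassCurve.Affine.equation_iff x y).mp hns.1
    rw [ha1, ha2, ha3, ha4, ha6] at h
    linear_combination h
  -- valuations of constants
  have hnd : ∀ i j : ℕ, ¬ p ∣ 2 ^ i * 3 ^ j := by
    intro i j h
    rcases (Nat.Prime.dvd_mul hp).mp h with h | h
    · have := (Nat.prime_dvd_prime_iff_eq hp Nat.prime_two).mp (hp.dvd_of_dvd_pow h); omega
    · have := (Nat.prime_dvd_prime_iff_eq hp Nat.prime_three).mp (hp.dvd_of_dvd_pow h); omega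
  have hvnat : ∀ n : ℕ, ¬ p ∣ n → padicValRat p (n : ℚ) = 0 := by
    intro n h
    rw [← padicValRat_of_nat, padicValNat.eq_zero_of_not_dvd h]
    rfl
  have hv432 : padicValRat p (432 : ℚ) = 0 := by
    have h := hnd 4 3; norm_num at h; exact_mod_cast hvnat 432 h
  have hv36 : padicValRat p (36 : ℚ) = 0 := by
    have h := hnd 2 2; norm_num at h; exact_mod_cast hvnat 36 h
  have hv4 : padicValRat p (4 : ℚ) = 0 := by
    have h := hnd 2 0; norm_num at h; exact_mod_cast hvnat 4 h
  have hv96 : padicValRat p (96 : ℚ) = 0 := by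
    have h := hnd 5 1; norm_num at h; exact_mod_cast hvnat 96 h
  have hv48 : padicValRat p (48 : ℚ) = 0 := by
    have h := hnd 4 1; norm_num at h; exact_mod_cast hvnat 48 h
  have hv64 : padicValRat p (64 : ℚ) = 0 := by
    have h := hnd 6 0; norm_num at h; exact_mod_cast hvnat 64 h
  have hvm : padicValRat p (m : ℚ) = 0 := by
    rw [padicValRat.of_int, padicValInt.eq_zero_of_not_dvd hpm]
    rfl
  have hb0 : b ≠ 0 := by
    rw [hb]; exact mul_ne_zero (by norm_num) (pow_ne_zero 2 hmQ)
  have hvb : padicValRat p b = 0 := by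
    rw [hb, show (-432 : ℚ) * (m : ℚ) ^ 2 = -(432 * (m : ℚ) ^ 2) by ring, padicValRat.neg,
      padicValRat.mul (by norm_num) (pow_ne_zero 2 hmQ), padicValRat.pow (m : ℚ), hv432, hvm]
    ring
  -- the key ultrametric lemma
  have key : ∀ u c : ℚ, u ≠ 0 → c ≠ 0 → padicValRat p c = 0 → 0 < padicValRat p u →
      (u + c ≠ 0 ∧ padicValRat p (u + c) = 0) := by
    intro u c hu hc hc0 hupos
    have hlt : padicValRat p c < padicValRat p u := by rw [hc0]; exact hupos
    have hne : u + c ≠ 0 := by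
      intro h
      have hu' : u = -c := by linarith [eq_neg_of_add_eq_zero_left h]
      rw [hu', padicValRat.neg] at hlt
      exact lt_irrefl _ hlt
    refine ⟨hne, ?_⟩
    rw [add_comm] at hne ⊢
    rw [padicValRat.add_eq_of_lt hne hc hu hlt, hc0]
  have hvx3 : padicValRat p (x ^ 3) = 3 * padicValRat p x := by
    rw [padicValRat.pow x]; norm_num
  have hx3ne : x ^ 3 ≠ 0 := pow_ne_zero 3 hx0
  -- x^3 + b
  have h1 := key (x ^ 3) b hx3ne hb0 hvb (by rw [hvx3]; linarith)
  -- x^3 + 4b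
  have h4b0 : (4 : ℚ) * b ≠ 0 := mul_ne_zero (by norm_num) hb0
  have hv4b : padicValRat p ((4 : ℚ) * b) = 0 := by
    rw [padicValRat.mul (by norm_num) hb0, hv4, hvb]; ring
  have h4 := key (x ^ 3) ((4 : ℚ) * b) hx3ne h4b0 hv4b (by rw [hvx3]; linarith)
  -- y ≠ 0 and v y = 0
  have hy2ne : y ^ 2 ≠ 0 := by rw [hE]; exact h1.1
  have hy : y ≠ 0 := by intro h; exact hy2ne (by rw [h]; ring)
  have hvy : padicValRat p y = 0 := by
    have h2 := padicValRat.pow (p := p) y (k := 2)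
    rw [hE, h1.2] at h2
    have : ((2 : ℕ) : ℤ) * padicValRat p y = 0 := h2.symm
    push_cast at this
    linarith
  -- negation facts
  have hyneg : y ≠ (Mordell m).negY x y := by
    simp only [WeierstrassCurve.Affine.negY, ha1, ha3, zero_mul, sub_zero]
    intro h; exact hy (by linarith)
  -- slope of doubling
  have hL1 : (Mordell m).slope x x y y * (2 * y) = 3 * x ^ 2 := by
    rw [WeierstrassCurve.Affine.slope_of_Y_ne rfl hyneg, div_mul_eq_mul_div,
      div_eq_iff (sub_ne_zero.mpr hyneg)]
    simp only [WeierstrassCurve.Affine.negY, ha1, ha2, ha3, ha4]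
    ring
  -- doubling
  obtain ⟨hdx, hx2'⟩ := mordell_dx x y b ((Mordell m).slope x x y y)
    ((Mordell m).addX x x ((Mordell m).slope x x y y)) hE hL1 rfl
  have hx2ne : (Mordell m).addX x x ((Mordell m).slope x x y y) ≠ x := by
    intro h
    rw [h, sub_self, zero_mul] at hdx
    have h3 : (3 : ℚ) * x * (x ^ 3 + 4 * b) ≠ 0 :=
      mul_ne_zero (mul_ne_zero (by norm_num) hx0) h4.1
    exact h3 (by linarith)
  -- the slope of the second addition
  have hs2 : (Mordell m).slope ((Mordell m).addX x x ((Mordell m).slope x x y y)) x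
        ((Mordell m).addY x x y ((Mordell m).slope x x y y)) y *
        ((Mordell m).addX x x ((Mordell m).slope x x y y) - x) =
      (Mordell m).addY x x y ((Mordell m).slope x x y y) - y := by
    rw [WeierstrassCurve.Affine.slope_of_X_ne hx2ne]
    exact div_mul_cancel₀ _ (sub_ne_zero.mpr hx2ne)
  -- the big identity
  have hbig := mordell_big x y b ((Mordell m).slope x x y y)
    ((Mordell m).addX x x ((Mordell m).slope x x y y))
    ((Mordell m).addY x x y ((Mordell m).slope x x y y))
    ((Mordell m).slope ((Mordell m).addX x x ((Mordell m).slope x x y y)) x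
      ((Mordell m).addY x x y ((Mordell m).slope x x y y)) y)
    ((Mordell m).addX ((Mordell m).addX x x ((Mordell m).slope x x y y)) x
      ((Mordell m).slope ((Mordell m).addX x x ((Mordell m).slope x x y y)) x
        ((Mordell m).addY x x y ((Mordell m).slope x x y y)) y))
    hE hL1 rfl rfl hs2 rfl
  -- the point 3Q
  have h3Qeq : (3 : ℕ) • WeierstrassCurve.Affine.Point.some _ _ hns =
      WeierstrassCurve.Affine.Point.some _ _
        (WeierstrassCurve.Affine.nonsingular_add
          (WeierstrassCurve.Affine.nonsingular_add hns hns fun h => hyneg h.2) hns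
          fun h => absurd h.1 hx2ne) := by
    calc (3 : ℕ) • WeierstrassCurve.Affine.Point.some _ _ hns
        = WeierstrassCurve.Affine.Point.some _ _ hns + WeierstrassCurve.Affine.Point.some _ _ hns +
            WeierstrassCurve.Affine.Point.some _ _ hns := by
          rw [show (3 : ℕ) = 2 + 1 from rfl, succ_nsmul, two_nsmul]
      _ = WeierstrassCurve.Affine.Point.some _ _
            (WeierstrassCurve.Affine.nonsingular_add hns hns fun h => hyneg h.2) +
            WeierstrassCurve.Affine.Point.some _ _ hns := by
          rw [WeierstrassCurve.Affine.Point.add_self_of_Y_ne hyneg]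
      _ = _ := WeierstrassCurve.Affine.Point.add_of_X_ne hx2ne
  have hxc : xCoord ((3 : ℕ) • WeierstrassCurve.Affine.Point.some _ _ hns) =
      (Mordell m).addX ((Mordell m).addX x x ((Mordell m).slope x x y y)) x
        ((Mordell m).slope ((Mordell m).addX x x ((Mordell m).slope x x y y)) x
          ((Mordell m).addY x x y ((Mordell m).slope x x y y)) y) := by
    rw [h3Qeq]; rfl
  -- valuation of N
  have hc96ne : (96 : ℚ) * b ≠ 0 := mul_ne_zero (by norm_num) hb0
  have hvc96 : padicValRat p ((96 : ℚ) * b) = 0 := by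
    rw [padicValRat.mul (by norm_num) hb0, hv96, hvb]; ring
  have hc48ne : (48 : ℚ) * b ^ 2 ≠ 0 := mul_ne_zero (by norm_num) (pow_ne_zero 2 hb0)
  have hvc48 : padicValRat p ((48 : ℚ) * b ^ 2) = 0 := by
    rw [padicValRat.mul (by norm_num) (pow_ne_zero 2 hb0), hv48, padicValRat.pow b, hvb]
    ring
  have hc64ne : (64 : ℚ) * b ^ 3 ≠ 0 := mul_ne_zero (by norm_num) (pow_ne_zero 3 hb0)
  have hvc64 : padicValRat p ((64 : ℚ) * b ^ 3) = 0 := by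
    rw [padicValRat.mul (by norm_num) (pow_ne_zero 3 hb0), hv64, padicValRat.pow b, hvb]
    ring
  have t0 : x ^ 3 + -(96 * b) ≠ 0 ∧ padicValRat p (x ^ 3 + -(96 * b)) = 0 :=
    key (x ^ 3) (-(96 * b)) hx3ne (neg_ne_zero.mpr hc96ne)
      (by rw [padicValRat.neg]; exact hvc96) (by rw [hvx3]; linarith)
  have t0' : x ^ 3 - 96 * b ≠ 0 ∧ padicValRat p (x ^ 3 - 96 * b) = 0 := by
    rwa [← sub_eq_add_neg] at t0
  have t1ne : x ^ 3 * (x ^ 3 - 96 * b) ≠ 0 := mul_ne_zero hx3ne t0'.1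
  have hvt1 : padicValRat p (x ^ 3 * (x ^ 3 - 96 * b)) = 3 * padicValRat p x := by
    rw [padicValRat.mul hx3ne t0'.1, hvx3, t0'.2]; ring
  have t2 : x ^ 3 * (x ^ 3 - 96 * b) + 48 * b ^ 2 ≠ 0 ∧
      padicValRat p (x ^ 3 * (x ^ 3 - 96 * b) + 48 * b ^ 2) = 0 :=
    key _ _ t1ne hc48ne hvc48 (by rw [hvt1]; linarith)
  have t3ne : x ^ 3 * (x ^ 3 * (x ^ 3 - 96 * b) + 48 * b ^ 2) ≠ 0 := mul_ne_zero hx3ne t2.1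
  have hvt3 : padicValRat p (x ^ 3 * (x ^ 3 * (x ^ 3 - 96 * b) + 48 * b ^ 2)) =
      3 * padicValRat p x := by
    rw [padicValRat.mul hx3ne t2.1, hvx3, t2.2]; ring
  have tN : x ^ 3 * (x ^ 3 * (x ^ 3 - 96 * b) + 48 * b ^ 2) + 64 * b ^ 3 ≠ 0 ∧
      padicValRat p (x ^ 3 * (x ^ 3 * (x ^ 3 - 96 * b) + 48 * b ^ 2) + 64 * b ^ 3) = 0 :=
    key _ _ t3ne hc64ne hvc64 (by rw [hvt3]; linarith)
  have hNsplit : x ^ 9 - 96 * b * x ^ 6 + 48 * b ^ 2 * x ^ 3 + 64 * b ^ 3 =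
      x ^ 3 * (x ^ 3 * (x ^ 3 - 96 * b) + 48 * b ^ 2) + 64 * b ^ 3 := by ring
  have hNne : x ^ 9 - 96 * b * x ^ 6 + 48 * b ^ 2 * x ^ 3 + 64 * b ^ 3 ≠ 0 := by
    rw [hNsplit]; exact tN.1
  have hvN : padicValRat p (x ^ 9 - 96 * b * x ^ 6 + 48 * b ^ 2 * x ^ 3 + 64 * b ^ 3) = 0 := by
    rw [hNsplit]; exact tN.2
  -- conclude
  generalize hx₃def : (Mordell m).addX ((Mordell m).addX x x ((Mordell m).slope x x y y)) x
      ((Mordell m).slope ((Mordell m).addX x x ((Mordell m).slope x x y y)) x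
        ((Mordell m).addY x x y ((Mordell m).slope x x y y)) y) = x₃ at hbig hxc
  have hRHSne : (4 : ℚ) * (x ^ 3 + b) *
      (x ^ 9 - 96 * b * x ^ 6 + 48 * b ^ 2 * x ^ 3 + 64 * b ^ 3) ≠ 0 :=
    mul_ne_zero (mul_ne_zero (by norm_num) h1.1) hNne
  have hx₃ne : x₃ ≠ 0 := by
    intro h
    rw [h, zero_mul] at hbig
    exact hRHSne hbig.symm
  have hfac1ne : (36 : ℚ) * x ^ 2 ≠ 0 := mul_ne_zero (by norm_num) (pow_ne_zero 2 hx0)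
  have hfac2ne : (36 : ℚ) * x ^ 2 * y ^ 2 ≠ 0 := mul_ne_zero hfac1ne (pow_ne_zero 2 hy)
  have hfacne : (36 : ℚ) * x ^ 2 * y ^ 2 * (x ^ 3 + 4 * b) ^ 2 ≠ 0 :=
    mul_ne_zero hfac2ne (pow_ne_zero 2 h4.1)
  have hvfac : padicValRat p (36 * x ^ 2 * y ^ 2 * (x ^ 3 + 4 * b) ^ 2) =
      2 * padicValRat p x := by
    rw [padicValRat.mul hfac2ne (pow_ne_zero 2 h4.1),
      padicValRat.mul hfac1ne (pow_ne_zero 2 hy),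
      padicValRat.mul (by norm_num : (36 : ℚ) ≠ 0) (pow_ne_zero 2 hx0),
      padicValRat.pow x, padicValRat.pow y, padicValRat.pow (x ^ 3 + 4 * b), hv36, hvy, h4.2]
    push_cast
    ring
  have hvrhs : padicValRat p (4 * (x ^ 3 + b) *
      (x ^ 9 - 96 * b * x ^ 6 + 48 * b ^ 2 * x ^ 3 + 64 * b ^ 3)) = 0 := by
    rw [padicValRat.mul (mul_ne_zero (by norm_num) h1.1) hNne,
      padicValRat.mul (by norm_num : (4 : ℚ) ≠ 0) h1.1, hv4, h1.2, hvN]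
    ring
  have hveq := congrArg (padicValRat p) hbig
  rw [padicValRat.mul hx₃ne hfacne, hvfac, hvrhs] at hveq
  rw [hxc]
  linarith
end

section
/- Let m be a nonzero cube-free integer, let Q be a point of infinite order on E: y^2 = x^3 - 432m^2, and let p ≥ 5 be a prime dividing m. Then for every n ≥ 1: p divides A_n if and only if p divides A_1 and 3 does not divide n. In particular, a prime p ≥ 5 of bad reduction dividing some term A_n must divide A_1. -/
open WeierstrassCurve

set_option linter.unusedVariables false
set_option linter.unusedSectionVars false
namespace MordellAux


variable {p : ℕ} [hp : Fact p.Prime]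

local notation "v" => padicValRat p

lemma vge_add {k : ℤ} {a b : ℚ} (ha : a = 0 ∨ k ≤ v a) (hb : b = 0 ∨ k ≤ v b) :
    a + b = 0 ∨ k ≤ v (a + b) := by
  by_cases hab : a + b = 0
  · exact Or.inl hab
  rcases ha with rfl | ha
  · rcases hb with rfl | hb
    · simp at hab
    · exact Or.inr (by simpa using hb)
  rcases hb with rfl | hb
  · exact Or.inr (by simpa using ha)
  right
  calc k ≤ min (v a) (v b) := le_min ha hb
    _ ≤ v (a + b) := padicValRat.min_le_padicValRat_add hab

lemma v_add_strict {a b : ℚ} (ha : a ≠ 0) (hb : b = 0 ∨ v a < v b) :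
    a + b ≠ 0 ∧ v (a + b) = v a := by
  rcases hb with rfl | hb
  · simpa using ha
  by_cases hbne : b = 0
  · subst hbne; simpa using ha
  have hne : a ≠ -b := by
    rintro rfl
    rw [padicValRat.neg] at hb; omega
  have hab : a + b ≠ 0 := fun h => hne (eq_neg_of_add_eq_zero_left h)
  exact ⟨hab, padicValRat.add_eq_of_lt hab ha hbne hb⟩

lemma v_mul {a b : ℚ} (ha : a ≠ 0) (hb : b ≠ 0) : v (a * b) = v a + v b :=
  padicValRat.mul ha hb

lemma v_sq {a : ℚ} (ha : a ≠ 0) : v (a ^ 2) = 2 * v a := by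
  rw [padicValRat.pow a]; push_cast; ring

lemma v_cube {a : ℚ} (ha : a ≠ 0) : v (a ^ 3) = 3 * v a := by
  rw [padicValRat.pow a]; push_cast; ring


variable {D : ℚ} {e : ℤ}

/-- Structure of a singular-reduction point: `v y = e` and `e ≤ v x`. -/
lemma sing_val (hD : v D = 2*e) (hDne : D ≠ 0) (he1 : 1 ≤ e) (he2 : e ≤ 2)
    {x y : ℚ} (hx0 : x ≠ 0) (hy0 : y ≠ 0) (hE : y^2 = x^3 - D) (h1 : 1 ≤ v x) :
    e ≤ v x ∧ v y = e := by
  have hx3 : v (x^3) = 3 * v x := v_cube hx0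
  have hy2 : v (y^2) = 2 * v y := v_sq hy0
  have hDneg : v (-D) = 2*e := by rw [padicValRat.neg]; exact hD
  have hsum : x^3 + -D ≠ 0 := by
    rw [← sub_eq_add_neg, ← hE]; exact pow_ne_zero _ hy0
  have hne3 : v (x^3) ≠ v (-D) := by rw [hx3, hDneg]; omega
  have hmin : v (y^2) = min (v (x^3)) (v (-D)) := by
    rw [hE, sub_eq_add_neg]
    exact padicValRat.add_eq_min hsum (pow_ne_zero _ hx0) (neg_ne_zero.2 hDne) hne3
  rw [hx3, hDneg, hy2] at hmin
  rcases le_total (3 * v x) (2*e) with h | h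
  · rw [min_eq_left h] at hmin; omega
  · rw [min_eq_right h] at hmin; omega

/-- The key identity `L(y₁+y₂) = x₁² + x₁x₂ + x₂²` for a line meeting the curve in a
collinear triple with Vieta relations. -/
lemma key_identity {x₁ y₁ x₂ y₂ x₃ L ν : ℚ}
    (l₁ : y₁ = L*x₁ + ν) (l₂ : y₂ = L*x₂ + ν)
    (V1 : x₁ + x₂ + x₃ = L^2) (V2 : x₁*x₂ + x₁*x₃ + x₂*x₃ = -(2*L*ν)) :
    L*(y₁+y₂) = x₁^2 + x₁*x₂ + x₂^2 := by
  linear_combination L*l₁ + L*l₂ - (x₁+x₂)*V1 + V2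

lemma quad_pos {x₁ x₂ : ℚ} (h : x₁ ≠ 0) : 0 < x₁^2 + x₁*x₂ + x₂^2 := by
  have h1 : 0 < x₁^2 := by positivity
  nlinarith [sq_nonneg (x₁+x₂), sq_nonneg x₂]

/-- Core lemma (A): in a collinear triple, it is impossible that two points are
nonsingular and the third is singular. -/
lemma core_A_aux (hD : v D = 2*e) (he1 : 1 ≤ e) (hv2 : v 2 = 0)
    {x₁ x₂ x₃ L ν : ℚ} (h₁0 : x₁ ≠ 0) (h₂0 : x₂ ≠ 0) (h₃0 : x₃ ≠ 0)
    (V1 : x₁ + x₂ + x₃ = L^2) (V2 : x₁*x₂ + x₁*x₃ + x₂*x₃ = -(2*L*ν))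
    (V3 : x₁*x₂*x₃ = ν^2 + D)
    (hle : v x₁ ≤ v x₂) (h1 : v x₁ ≤ 0) (h2 : v x₂ ≤ 0) (h3 : 1 ≤ v x₃) : False := by
  -- the product x₁x₂ dominates in V2
  have h12 : v (x₁*x₂) = v x₁ + v x₂ := v_mul h₁0 h₂0
  have h13 : v (x₁*x₃) = v x₁ + v x₃ := v_mul h₁0 h₃0
  have h23 : v (x₂*x₃) = v x₂ + v x₃ := v_mul h₂0 h₃0
  have hb : x₁*x₃ + x₂*x₃ = 0 ∨ v x₁ + v x₂ + 1 ≤ v (x₁*x₃ + x₂*x₃) := by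
    apply vge_add
    · right; rw [h13]; omega
    · right; rw [h23]; omega
  have hb' : x₁*x₃ + x₂*x₃ = 0 ∨ v (x₁*x₂) < v (x₁*x₃ + x₂*x₃) := by
    rcases hb with h | h
    · exact Or.inl h
    · right; omega
  have hstrict := v_add_strict (a := x₁*x₂) (b := x₁*x₃ + x₂*x₃)
    (mul_ne_zero h₁0 h₂0) hb'
  have hsum_eq : x₁*x₂ + (x₁*x₃ + x₂*x₃) = -(2*L*ν) := by linear_combination V2
  rw [hsum_eq] at hstrict
  obtain ⟨hLν0, hLν⟩ := hstrict
  have hL0 : L ≠ 0 := by intro h; rw [h] at hLν0; simp at hLν0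
  have hν0 : ν ≠ 0 := by intro h; rw [h] at hLν0; simp at hLν0
  have hvLν : v L + v ν = v x₁ + v x₂ := by
    rw [padicValRat.neg, v_mul (mul_ne_zero two_ne_zero hL0) hν0, v_mul two_ne_zero hL0, hv2,
      h12] at hLν
    omega
  have hL2 : (L^2 : ℚ) ≠ 0 := pow_ne_zero _ hL0
  have hvL2 : v (L^2) = 2 * v L := v_sq hL0
  -- v(L²) ≥ min of the x's
  have hV1v : v x₁ ≤ 2 * v L := by
    have : x₁ + (x₂ + x₃) = 0 ∨ v x₁ ≤ v (x₁ + (x₂ + x₃)) := by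
      apply vge_add (Or.inr le_rfl)
      apply vge_add <;> right <;> omega
    have hsum1 : x₁ + (x₂ + x₃) = L^2 := by linear_combination V1
    rw [hsum1] at this
    rcases this with h | h
    · exact absurd h hL2
    · rw [hvL2] at h; omega
  have hprod3 : v (x₁*x₂*x₃) = v x₁ + v x₂ + v x₃ := by
    rw [v_mul (mul_ne_zero h₁0 h₂0) h₃0, h12]
  rcases lt_or_ge (v x₁) 0 with hneg | hzero
  · -- case v x₁ ≤ -1 : evaluate v(ν² + D) = 2 v ν
    have hν2 : v (ν^2) = 2 * v ν := v_sq hν0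
    have hvν2 : 2 * v ν < 2 * e := by omega
    have hstr := v_add_strict (a := ν^2) (b := D) (pow_ne_zero _ hν0)
      (Or.inr (by rw [hν2, hD]; omega))
    rw [← V3, hprod3, hν2] at hstr
    omega
  · -- case v x₁ = v x₂ = 0
    have hx1 : v x₁ = 0 := le_antisymm h1 hzero
    have hx2 : v x₂ = 0 := by omega
    -- ν has positive valuation
    have hνpos : 1 ≤ v ν := by
      by_contra hc
      push_neg at hc
      have hν2 : v (ν^2) = 2 * v ν := v_sq hν0
      have hstr := v_add_strict (a := ν^2) (b := D) (pow_ne_zero _ hν0)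
        (Or.inr (by rw [hν2, hD]; omega))
      rw [← V3, hprod3, hν2] at hstr
      omega
  -- then v L ≤ -1 and V1 gives a contradiction
    omega

/-- Core lemma (A), symmetric version. -/
lemma core_A (hD : v D = 2*e) (he1 : 1 ≤ e) (hv2 : v 2 = 0)
    {x₁ x₂ x₃ L ν : ℚ} (h₁0 : x₁ ≠ 0) (h₂0 : x₂ ≠ 0) (h₃0 : x₃ ≠ 0)
    (V1 : x₁ + x₂ + x₃ = L^2) (V2 : x₁*x₂ + x₁*x₃ + x₂*x₃ = -(2*L*ν))
    (V3 : x₁*x₂*x₃ = ν^2 + D)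
    (h1 : v x₁ ≤ 0) (h2 : v x₂ ≤ 0) (h3 : 1 ≤ v x₃) : False := by
  rcases le_total (v x₁) (v x₂) with h | h
  · exact core_A_aux hD he1 hv2 h₁0 h₂0 h₃0 V1 V2 V3 h h1 h2 h3
  · exact core_A_aux hD he1 hv2 (L := L) (ν := ν) h₂0 h₁0 h₃0 (by linear_combination V1)
      (by linear_combination V2) (by linear_combination V3) h h2 h1 h3


/-- Core lemma (C): two singular points in the same component add (third collinear point)
to a singular point. -/
lemma core_C (hD : v D = 2*e) (hDne : D ≠ 0) (he1 : 1 ≤ e) (he2 : e ≤ 2)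
    {x₁ y₁ x₂ y₂ x₃ L ν : ℚ}
    (h₁0 : x₁ ≠ 0) (h₂0 : x₂ ≠ 0) (h₃0 : x₃ ≠ 0) (hy₁0 : y₁ ≠ 0) (hy₂0 : y₂ ≠ 0)
    (E₁ : y₁^2 = x₁^3 - D) (E₂ : y₂^2 = x₂^3 - D)
    (l₁ : y₁ = L*x₁ + ν) (l₂ : y₂ = L*x₂ + ν)
    (V1 : x₁ + x₂ + x₃ = L^2) (V2 : x₁*x₂ + x₁*x₃ + x₂*x₃ = -(2*L*ν))
    (h1 : 1 ≤ v x₁) (h2 : 1 ≤ v x₂)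
    (hyy0 : y₁ + y₂ ≠ 0) (hvyy : v (y₁ + y₂) = e) : 1 ≤ v x₃ := by
  obtain ⟨hex₁, hey₁⟩ := sing_val hD hDne he1 he2 h₁0 hy₁0 E₁ h1
  obtain ⟨hex₂, hey₂⟩ := sing_val hD hDne he1 he2 h₂0 hy₂0 E₂ h2
  have hK := key_identity l₁ l₂ V1 V2
  have hQpos := quad_pos (x₂ := x₂) h₁0
  have hQne : x₁^2 + x₁*x₂ + x₂^2 ≠ 0 := ne_of_gt hQpos
  have hL0 : L ≠ 0 := by
    intro h; rw [h, zero_mul] at hK; exact hQne hK.symm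
  have hvK : v L + v (y₁+y₂) = v (x₁^2 + x₁*x₂ + x₂^2) := by
    rw [← v_mul hL0 hyy0, hK]
  have hQge : 2*e ≤ v (x₁^2 + x₁*x₂ + x₂^2) := by
    have : x₁^2 + x₁*x₂ + x₂^2 = 0 ∨ 2*e ≤ v (x₁^2 + x₁*x₂ + x₂^2) := by
      apply vge_add
      apply vge_add
      · right; rw [v_sq h₁0]; omega
      · right; rw [v_mul h₁0 h₂0]; omega
      · right; rw [v_sq h₂0]; omega
    tauto
  have hvL : e ≤ v L := by omega
  have hx₃ : x₃ = L^2 + (-x₁ + -x₂) := by linear_combination V1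
  have : x₃ = 0 ∨ 1 ≤ v x₃ := by
    rw [hx₃]
    apply vge_add
    · right; rw [v_sq hL0]; omega
    apply vge_add
    · right; rw [padicValRat.neg]; omega
    · right; rw [padicValRat.neg]; omega
  tauto

/-- Core lemma (D): if all three collinear points are singular, any two of them are in the
same component. -/
lemma core_D (hD : v D = 2*e) (hDne : D ≠ 0) (he1 : 1 ≤ e) (he2 : e ≤ 2)
    {x₁ y₁ x₂ y₂ x₃ L ν : ℚ}
    (h₁0 : x₁ ≠ 0) (h₂0 : x₂ ≠ 0) (h₃0 : x₃ ≠ 0) (hy₁0 : y₁ ≠ 0) (hy₂0 : y₂ ≠ 0)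
    (E₁ : y₁^2 = x₁^3 - D) (E₂ : y₂^2 = x₂^3 - D)
    (l₁ : y₁ = L*x₁ + ν) (l₂ : y₂ = L*x₂ + ν)
    (V1 : x₁ + x₂ + x₃ = L^2)
    (h1 : 1 ≤ v x₁) (h2 : 1 ≤ v x₂) (h3 : 1 ≤ v x₃) :
    y₁ - y₂ = 0 ∨ e + 1 ≤ v (y₁ - y₂) := by
  obtain ⟨hex₁, hey₁⟩ := sing_val hD hDne he1 he2 h₁0 hy₁0 E₁ h1
  obtain ⟨hex₂, hey₂⟩ := sing_val hD hDne he1 he2 h₂0 hy₂0 E₂ h2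
  by_cases hyy : y₁ - y₂ = 0
  · exact Or.inl hyy
  right
  have hldiff : y₁ - y₂ = L * (x₁ - x₂) := by linear_combination l₁ - l₂
  have hL0 : L ≠ 0 := by
    intro h; rw [h, zero_mul] at hldiff; exact hyy hldiff
  have hxx0 : x₁ - x₂ ≠ 0 := by
    intro h; rw [h, mul_zero] at hldiff; exact hyy hldiff
  have hvL : 1 ≤ v L := by
    have hsum : x₁ + (x₂ + x₃) = L^2 := by linear_combination V1
    have : x₁ + (x₂ + x₃) = 0 ∨ 1 ≤ v (x₁ + (x₂ + x₃)) := by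
      apply vge_add (Or.inr (by omega))
      apply vge_add <;> right <;> omega
    rw [hsum] at this
    rcases this with h | h
    · exact absurd h (pow_ne_zero _ hL0)
    · rw [v_sq hL0] at h; omega
  have hvxx : e ≤ v (x₁ - x₂) := by
    have : x₁ + -x₂ = 0 ∨ e ≤ v (x₁ + -x₂) := by
      apply vge_add (Or.inr (by omega))
      right; rw [padicValRat.neg]; omega
    rw [← sub_eq_add_neg] at this
    tauto
  rw [hldiff, v_mul hL0 hxx0]
  omega

/-- Core lemma (opp): two singular points in opposite components cannot add (with third
collinear point) to a singular point. -/
lemma core_opp (hD : v D = 2*e) (hDne : D ≠ 0) (he1 : 1 ≤ e) (he2 : e ≤ 2) (hv2 : v 2 = 0)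
    {x₁ y₁ x₂ y₂ x₃ L ν : ℚ}
    (h₁0 : x₁ ≠ 0) (h₂0 : x₂ ≠ 0) (h₃0 : x₃ ≠ 0) (hy₁0 : y₁ ≠ 0) (hy₂0 : y₂ ≠ 0)
    (E₁ : y₁^2 = x₁^3 - D) (E₂ : y₂^2 = x₂^3 - D)
    (l₁ : y₁ = L*x₁ + ν) (l₂ : y₂ = L*x₂ + ν)
    (V1 : x₁ + x₂ + x₃ = L^2) (V2 : x₁*x₂ + x₁*x₃ + x₂*x₃ = -(2*L*ν))
    (h1 : 1 ≤ v x₁) (h2 : 1 ≤ v x₂)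
    (hopp : y₁ + y₂ = 0 ∨ e + 1 ≤ v (y₁ + y₂)) (h3 : 1 ≤ v x₃) : False := by
  obtain ⟨hex₁, hey₁⟩ := sing_val hD hDne he1 he2 h₁0 hy₁0 E₁ h1
  obtain ⟨hex₂, hey₂⟩ := sing_val hD hDne he1 he2 h₂0 hy₂0 E₂ h2
  have hK := key_identity l₁ l₂ V1 V2
  have hQpos := quad_pos (x₂ := x₂) h₁0
  have hQne : x₁^2 + x₁*x₂ + x₂^2 ≠ 0 := ne_of_gt hQpos
  rcases hopp with hyy | hyy
  · rw [hyy, mul_zero] at hK; exact hQne hK.symm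
  have hyy0 : y₁ + y₂ ≠ 0 := by
    intro h; rw [h] at hyy; simp [padicValRat.zero] at hyy; omega
  -- v(y₁ - y₂) = e
  have h2y : (2*y₁ : ℚ) ≠ 0 := mul_ne_zero two_ne_zero hy₁0
  have hv2y : v (2*y₁) = e := by rw [v_mul two_ne_zero hy₁0, hv2, hey₁]; omega
  have hdiff := v_add_strict (a := 2*y₁) (b := -(y₁+y₂)) h2y
    (Or.inr (by rw [padicValRat.neg, hv2y]; omega))
  have hsum_eq : 2*y₁ + -(y₁+y₂) = y₁ - y₂ := by ring
  rw [hsum_eq, hv2y] at hdiff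
  obtain ⟨hyd0, hydv⟩ := hdiff
  have hldiff : y₁ - y₂ = L * (x₁ - x₂) := by linear_combination l₁ - l₂
  have hL0 : L ≠ 0 := by
    intro h; rw [h, zero_mul] at hldiff; exact hyd0 hldiff
  have hxx0 : x₁ - x₂ ≠ 0 := by
    intro h; rw [h, mul_zero] at hldiff; exact hyd0 hldiff
  have hvL : 1 ≤ v L := by
    have hsum : x₁ + (x₂ + x₃) = L^2 := by linear_combination V1
    have : x₁ + (x₂ + x₃) = 0 ∨ 1 ≤ v (x₁ + (x₂ + x₃)) := by
      apply vge_add (Or.inr (by omega))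
      apply vge_add <;> right <;> omega
    rw [hsum] at this
    rcases this with h | h
    · exact absurd h (pow_ne_zero _ hL0)
    · rw [v_sq hL0] at h; omega
  have hvxx : e ≤ v (x₁ - x₂) := by
    have : x₁ + -x₂ = 0 ∨ e ≤ v (x₁ + -x₂) := by
      apply vge_add (Or.inr (by omega))
      right; rw [padicValRat.neg]; omega
    rw [← sub_eq_add_neg] at this
    tauto
  rw [hldiff, v_mul hL0 hxx0] at hydv
  omega

/-- Core lemma (E): adding a nonsingular point to a singular point: if the third collinear
point is also singular, it lies in the opposite component. -/
lemma core_E (hD : v D = 2*e) (hDne : D ≠ 0) (he1 : 1 ≤ e) (he2 : e ≤ 2)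
    {x₁ x₂ y₂ x₃ y₃ L ν : ℚ}
    (h₁0 : x₁ ≠ 0) (h₂0 : x₂ ≠ 0) (h₃0 : x₃ ≠ 0) (hy₂0 : y₂ ≠ 0) (hy₃0 : y₃ ≠ 0)
    (E₂ : y₂^2 = x₂^3 - D) (E₃ : y₃^2 = x₃^3 - D)
    (l₂ : y₂ = L*x₂ + ν) (l₃ : y₃ = L*x₃ + ν)
    (V1 : x₁ + x₂ + x₃ = L^2) (V2 : x₁*x₂ + x₁*x₃ + x₂*x₃ = -(2*L*ν))
    (h1 : v x₁ ≤ 0) (h2 : 1 ≤ v x₂) (h3 : 1 ≤ v x₃) :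
    y₂ + y₃ = 0 ∨ e + 1 ≤ v (y₂ + y₃) := by
  obtain ⟨hex₂, hey₂⟩ := sing_val hD hDne he1 he2 h₂0 hy₂0 E₂ h2
  obtain ⟨hex₃, hey₃⟩ := sing_val hD hDne he1 he2 h₃0 hy₃0 E₃ h3
  -- K identity for the pair (2,3)
  have hK : L*(y₂+y₃) = x₂^2 + x₂*x₃ + x₃^2 :=
    key_identity (x₃ := x₁) l₂ l₃ (by linear_combination V1) (by linear_combination V2)
  have hQpos := quad_pos (x₂ := x₃) h₂0
  have hQne : x₂^2 + x₂*x₃ + x₃^2 ≠ 0 := ne_of_gt hQpos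
  have hL0 : L ≠ 0 := by
    intro h; rw [h, zero_mul] at hK; exact hQne hK.symm
  have hyy0 : y₂ + y₃ ≠ 0 := by
    intro h; rw [h, mul_zero] at hK; exact hQne hK.symm
  right
  -- v L ≤ 0 from V1
  have hstr := v_add_strict (p := p) (a := x₁) (b := x₂ + x₃) h₁0
    (by
      have : x₂ + x₃ = 0 ∨ 1 ≤ v (x₂ + x₃) := by
        apply vge_add <;> right <;> omega
      rcases this with h | h
      · exact Or.inl h
      · right; omega)
  have hsum : x₁ + (x₂ + x₃) = L^2 := by linear_combination V1
  rw [hsum] at hstr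
  obtain ⟨-, hvL2⟩ := hstr
  rw [v_sq hL0] at hvL2
  have hQge : 2*e ≤ v (x₂^2 + x₂*x₃ + x₃^2) := by
    have : x₂^2 + x₂*x₃ + x₃^2 = 0 ∨ 2*e ≤ v (x₂^2 + x₂*x₃ + x₃^2) := by
      apply vge_add
      apply vge_add
      · right; rw [v_sq h₂0]; omega
      · right; rw [v_mul h₂0 h₃0]; omega
      · right; rw [v_sq h₃0]; omega
    tauto
  have hvK : v L + v (y₂+y₃) = v (x₂^2 + x₂*x₃ + x₃^2) := by
    rw [← v_mul hL0 hyy0, hK]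
  omega





lemma mordell_negY (m : ℤ) (x y : ℚ) : (Mordell m).negY x y = -y := by
  simp [Mordell, WeierstrassCurve.Affine.negY]

lemma mordell_addX (m : ℤ) (x₁ x₂ L : ℚ) :
    (Mordell m).addX x₁ x₂ L = L^2 - x₁ - x₂ := by
  simp [Mordell, WeierstrassCurve.Affine.addX]

lemma mordell_addY (m : ℤ) (x₁ x₂ y₁ L : ℚ) :
    (Mordell m).addY x₁ x₂ y₁ L = -(L*((L^2 - x₁ - x₂) - x₁) + y₁) := by
  simp [Mordell, WeierstrassCurve.Affine.addY, WeierstrassCurve.Affine.negAddY,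
    WeierstrassCurve.Affine.negY, WeierstrassCurve.Affine.addX]

lemma mordell_equation {m : ℤ} {x y : ℚ} (h : (Mordell m).Equation x y) :
    y^2 = x^3 - 432*(m:ℚ)^2 := by
  rw [WeierstrassCurve.Affine.equation_iff] at h
  simp only [Mordell] at h
  linear_combination h

/-- The collinear triple package for the addition of two points on the Mordell curve. -/
lemma add_triple {m : ℤ} {x₁ y₁ x₂ y₂ : ℚ}
    (E₁ : y₁^2 = x₁^3 - 432*(m:ℚ)^2) (E₂ : y₂^2 = x₂^3 - 432*(m:ℚ)^2)
    (hne : ¬(x₁ = x₂ ∧ y₁ = -y₂)) :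
    ∃ ν : ℚ,
      y₁ = (Mordell m).slope x₁ x₂ y₁ y₂ * x₁ + ν ∧
      y₂ = (Mordell m).slope x₁ x₂ y₁ y₂ * x₂ + ν ∧
      (x₁*x₂ + x₁*((Mordell m).slope x₁ x₂ y₁ y₂^2 - x₁ - x₂)
        + x₂*((Mordell m).slope x₁ x₂ y₁ y₂^2 - x₁ - x₂)
        = -(2*(Mordell m).slope x₁ x₂ y₁ y₂*ν)) ∧
      (x₁*x₂*((Mordell m).slope x₁ x₂ y₁ y₂^2 - x₁ - x₂) = ν^2 + 432*(m:ℚ)^2) := by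
  set L := (Mordell m).slope x₁ x₂ y₁ y₂ with hL_def
  have key : (y₂ = L*x₂ + (y₁ - L*x₁)) ∧
      (x₁*x₂ + x₁*(L^2 - x₁ - x₂) + x₂*(L^2 - x₁ - x₂) = -(2*L*(y₁ - L*x₁))) ∧
      (x₁*x₂*(L^2 - x₁ - x₂) = (y₁ - L*x₁)^2 + 432*(m:ℚ)^2) := by
    rcases eq_or_ne x₁ x₂ with hx | hx
    · -- tangent case
      subst hx
      have hy : y₁ ≠ -y₂ := fun h => hne ⟨rfl, h⟩
      have hyeq : y₁ = y₂ := by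
        have hsq : (y₁ - y₂) * (y₁ + y₂) = 0 := by linear_combination E₁ - E₂
        rcases mul_eq_zero.1 hsq with h | h
        · exact sub_eq_zero.1 h
        · exact absurd (eq_neg_of_add_eq_zero_left h) hy
      have hy₁0 : y₁ ≠ 0 := by
        intro h
        exact hy (by rw [← hyeq, h]; ring)
      have hy' : y₁ ≠ (Mordell m).negY x₁ y₂ := by rw [mordell_negY]; exact hy
      have h2y : (2*y₁ : ℚ) ≠ 0 := mul_ne_zero two_ne_zero hy₁0
      have hL : L * (2*y₁) = 3*x₁^2 := by
        rw [hL_def, WeierstrassCurve.Affine.slope_of_Y_ne rfl hy', mordell_negY]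
        have hden : y₁ - -y₁ ≠ 0 := by intro h; apply h2y; linarith
        rw [div_mul_eq_mul_div, div_eq_iff hden]
        simp only [Mordell]
        ring
      refine ⟨by linear_combination -hyeq, by linear_combination hL, ?_⟩
      linear_combination x₁*hL - E₁
    · -- secant case
      have hxx : x₁ - x₂ ≠ 0 := sub_ne_zero.2 hx
      have hL : L * (x₁ - x₂) = y₁ - y₂ := by
        rw [hL_def, WeierstrassCurve.Affine.slope_of_X_ne hx]
        field_simp
      have hK : L*(y₁+y₂) = x₁^2 + x₁*x₂ + x₂^2 := by
        apply mul_right_cancel₀ hxx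
        linear_combination (y₁+y₂)*hL + E₁ - E₂
      refine ⟨by linear_combination hL, by linear_combination -(L*hL) + hK, ?_⟩
      linear_combination -E₁ - x₁*L*hL + x₁*hK
  exact ⟨y₁ - L*x₁, by ring, key.1, key.2.1, key.2.2⟩






lemma v_int_nonneg (z : ℤ) : 0 ≤ v (z : ℚ) := by
  rw [padicValRat.of_int]
  positivity

lemma v_int_eq_zero_of_not_dvd {z : ℤ} (h : ¬ (p:ℤ) ∣ z) : v (z : ℚ) = 0 := by
  rw [padicValRat.of_int, padicValInt.eq_zero_of_not_dvd h]
  rfl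

lemma one_le_v_int_of_dvd {z : ℤ} (hz : z ≠ 0) (h : (p:ℤ) ∣ z) : 1 ≤ v (z : ℚ) := by
  rw [padicValRat.of_int]
  have := (padicValInt_dvd_iff (p := p) 1 z).1 (by simpa using h)
  rcases this with h' | h'
  · exact absurd h' hz
  · exact_mod_cast h'

lemma dvd_of_one_le_v_int {z : ℤ} (h : 1 ≤ v (z : ℚ)) : (p:ℤ) ∣ z := by
  by_contra hc
  rw [v_int_eq_zero_of_not_dvd hc] at h
  omega

/-- Valuation of `A / B²` for coprime `A`, `B`. -/
lemma dvd_iff_one_le_val {A B : ℤ} (hA : A ≠ 0) (hB : 1 ≤ B) (hg : Int.gcd A B = 1) :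
    ((p:ℤ) ∣ A ↔ 1 ≤ v ((A:ℚ)/(B:ℚ)^2)) := by
  have hB0 : (B:ℚ) ≠ 0 := by
    intro h
    rw [show (B:ℚ) = ((B:ℤ):ℚ) from rfl, Int.cast_eq_zero] at h
    omega
  have hA0 : (A:ℚ) ≠ 0 := by
    intro h
    rw [show (A:ℚ) = ((A:ℤ):ℚ) from rfl, Int.cast_eq_zero] at h
    exact hA h
  have hval : v ((A:ℚ)/(B:ℚ)^2) = v (A:ℚ) - 2 * v (B:ℚ) := by
    rw [padicValRat.div hA0 (pow_ne_zero _ hB0), padicValRat.pow (B:ℚ)]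
    push_cast; ring
  constructor
  · intro hdvd
    have hnB : ¬ (p:ℤ) ∣ B := by
      intro hdB
      have : (p:ℤ) ∣ (Int.gcd A B : ℤ) := Int.dvd_coe_gcd hdvd hdB
      rw [hg] at this
      have := Int.le_of_dvd one_pos this
      have hp2 : 2 ≤ p := hp.out.two_le
      omega
    rw [hval, v_int_eq_zero_of_not_dvd hnB]
    have := one_le_v_int_of_dvd hA hdvd
    omega
  · intro hv
    by_contra hc
    rw [hval, v_int_eq_zero_of_not_dvd hc] at hv
    have := v_int_nonneg (p := p) B
    omega

lemma v_of_small_prime (hp5 : 5 ≤ p) : v (432 : ℚ) = 0 ∧ v (2 : ℚ) = 0 := by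
  have h432 : ¬ (p:ℤ) ∣ (432 : ℤ) := by
    intro h
    have hnat : p ∣ 432 := by exact_mod_cast Int.natCast_dvd_natCast.1 (by exact_mod_cast h)
    have : p ∣ 2^4 * 3^3 := by norm_num at hnat ⊢; exact hnat
    rcases (Nat.Prime.dvd_mul hp.out).1 this with h' | h'
    · have := Nat.le_of_dvd (by norm_num) (hp.out.dvd_of_dvd_pow h')
      omega
    · have := Nat.le_of_dvd (by norm_num) (hp.out.dvd_of_dvd_pow h')
      omega
  have h2 : ¬ (p:ℤ) ∣ (2 : ℤ) := by
    intro h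
    have hnat : p ∣ 2 := by exact_mod_cast Int.natCast_dvd_natCast.1 (by exact_mod_cast h)
    have := Nat.le_of_dvd (by norm_num) hnat
    omega
  constructor
  · have := v_int_eq_zero_of_not_dvd (p := p) h432
    simpa using this
  · have := v_int_eq_zero_of_not_dvd (p := p) h2
    simpa using this

/-- `e := v m` satisfies `1 ≤ e ≤ 2` for a cube-free `m` divisible by `p`. -/
lemma e_bounds {m : ℤ} (hm : m ≠ 0) (hcf : ∀ d : ℤ, d ^ 3 ∣ m → IsUnit d)
    (hp5 : 5 ≤ p) (hpm : (p : ℤ) ∣ m) :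
    1 ≤ v (m : ℚ) ∧ v (m : ℚ) ≤ 2 := by
  refine ⟨one_le_v_int_of_dvd hm hpm, ?_⟩
  have hnd : ¬ (p:ℤ)^3 ∣ m := by
    intro h
    have := hcf _ h
    rw [Int.isUnit_iff] at this
    rcases this with h' | h' <;> omega
  rw [padicValRat.of_int]
  have := (padicValInt_dvd_iff (p := p) 3 m).not.1 hnd
  push_neg at this
  have h2 := this.2
  exact_mod_cast by omega

/-- Valuation of the constant `432 m²`. -/
lemma vD_eq {m : ℤ} (hm : m ≠ 0) (hp5 : 5 ≤ p) :
    v (432*(m:ℚ)^2) = 2 * v (m:ℚ) := by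
  have hm0 : (m:ℚ) ≠ 0 := by
    intro h
    rw [Int.cast_eq_zero] at h
    exact hm h
  rw [padicValRat.mul (by norm_num) (pow_ne_zero _ hm0), (v_of_small_prime hp5).1,
    padicValRat.pow (m:ℚ)]
  push_cast; ring


end MordellAux

theorem bad_prime_divides_An_iff
    (m : ℤ) (hm : m ≠ 0) (hcf : CubeFree m)
    (Q : (Mordell m).Point) (hQ : ∀ k : ℕ, 0 < k → k • Q ≠ 0)
    (A B C : ℕ → ℤ)
    (hB : ∀ n : ℕ, 1 ≤ n → 1 ≤ B n)
    (hAB : ∀ n : ℕ, 1 ≤ n → Int.gcd (A n) (B n) = 1)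
    (hCB : ∀ n : ℕ, 1 ≤ n → Int.gcd (C n) (B n) = 1)
    (hABC : ∀ n : ℕ, 1 ≤ n →
      ∃ h : (Mordell m).Nonsingular ((A n : ℚ) / (B n : ℚ) ^ 2) ((C n : ℚ) / (B n : ℚ) ^ 3),
        n • Q = WeierstrassCurve.Affine.Point.some _ _ h)
    (p : ℕ) (hp : p.Prime) (hp5 : 5 ≤ p) (hpm : (p : ℤ) ∣ m) :
    ∀ n : ℕ, 1 ≤ n → ((p : ℤ) ∣ A n ↔ ((p : ℤ) ∣ A 1 ∧ ¬ 3 ∣ n)) := by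
  haveI hpf : Fact p.Prime := ⟨hp⟩
  classical
  set D : ℚ := 432*(m:ℚ)^2 with hD_def
  set e : ℤ := padicValRat p (m:ℚ) with he_def
  obtain ⟨he1, he2⟩ := MordellAux.e_bounds (p := p) hm hcf hp5 hpm
  rw [← he_def] at he1 he2
  have hD : padicValRat p D = 2*e := by
    have h := MordellAux.vD_eq (p := p) hm hp5
    rw [← he_def, ← hD_def] at h
    exact h
  have hv2 : padicValRat p 2 = 0 := (MordellAux.v_of_small_prime hp5).2
  have hm0 : (m:ℚ) ≠ 0 := by
    intro h; rw [Int.cast_eq_zero] at h; exact hm h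
  have hDpos : (0:ℚ) < D := by rw [hD_def]; positivity
  have hDne : D ≠ 0 := ne_of_gt hDpos
  set X : ℕ → ℚ := fun k => (A k : ℚ)/(B k : ℚ)^2 with hX_def
  set Y : ℕ → ℚ := fun k => (C k : ℚ)/(B k : ℚ)^3 with hY_def
  have hE : ∀ k, 1 ≤ k → (Y k)^2 = (X k)^3 - D := by
    intro k hk
    obtain ⟨hns, -⟩ := hABC k hk
    exact MordellAux.mordell_equation hns.1
  have hX0 : ∀ k, 1 ≤ k → X k ≠ 0 := by
    intro k hk h0
    have h := hE k hk
    rw [h0] at h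
    nlinarith [sq_nonneg (Y k)]
  have hY0 : ∀ k, 1 ≤ k → Y k ≠ 0 := by
    intro k hk h0
    obtain ⟨hns, heq⟩ := hABC k hk
    have hzero : (k + k) • Q = 0 := by
      rw [add_nsmul, heq]
      exact WeierstrassCurve.Affine.Point.add_of_Y_eq rfl
        (by rw [MordellAux.mordell_negY]; show Y k = -(Y k); rw [h0]; ring)
    exact hQ (k+k) (by omega) hzero
  have hA0 : ∀ k, 1 ≤ k → A k ≠ 0 := by
    intro k hk h0
    apply hX0 k hk
    show (A k : ℚ)/(B k : ℚ)^2 = 0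
    rw [h0]; simp
  have hdvd_iff : ∀ k, 1 ≤ k → ((p:ℤ) ∣ A k ↔ 1 ≤ padicValRat p (X k)) := fun k hk =>
    MordellAux.dvd_iff_one_le_val (hA0 k hk) (hB k hk) (hAB k hk)
  -- the collinear-triple package for the addition (n+1)•Q = n•Q + Q
  have step : ∀ n, 1 ≤ n → ∃ L ν : ℚ,
      Y n = L * X n + ν ∧ Y 1 = L * X 1 + ν ∧ (-Y (n+1)) = L * X (n+1) + ν ∧
      X n + X 1 + X (n+1) = L^2 ∧
      X n * X 1 + X n * X (n+1) + X 1 * X (n+1) = -(2*L*ν) ∧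
      X n * X 1 * X (n+1) = ν^2 + D := by
    intro n hn
    obtain ⟨hns1, heq1⟩ := hABC 1 le_rfl
    obtain ⟨hnsn, heqn⟩ := hABC n hn
    obtain ⟨hns3, heq3⟩ := hABC (n+1) (by omega)
    have hQ1 : Q = WeierstrassCurve.Affine.Point.some _ _ hns1 := by
      rw [← heq1, one_nsmul]
    have hne : ¬(X n = X 1 ∧ Y n = -(Y 1)) := by
      rintro ⟨hx, hy⟩
      apply hQ (n+1) (by omega)
      rw [succ_nsmul, heqn, hQ1]
      exact WeierstrassCurve.Affine.Point.add_of_Y_eq hx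
        (by rw [MordellAux.mordell_negY]; exact hy)
    have hEn : (Y n)^2 = (X n)^3 - 432*(m:ℚ)^2 := hE n hn
    have hE1 : (Y 1)^2 = (X 1)^3 - 432*(m:ℚ)^2 := hE 1 le_rfl
    obtain ⟨ν, l₁, l₂, V2, V3⟩ := MordellAux.add_triple hEn hE1 hne
    set L : ℚ := (Mordell m).slope (X n) (X 1) (Y n) (Y 1) with hLdef
    have hxy : X n = X 1 → Y n ≠ (Mordell m).negY (X 1) (Y 1) := by
      intro hx hy
      exact hne ⟨hx, by rwa [MordellAux.mordell_negY] at hy⟩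
    have hadd : (n+1) • Q = WeierstrassCurve.Affine.Point.some _ _
        (WeierstrassCurve.Affine.nonsingular_add hnsn hns1 (fun h => hxy h.1 h.2)) := by
      rw [succ_nsmul, heqn, hQ1, WeierstrassCurve.Affine.Point.add_some (fun h => hxy h.1 h.2)]
    rw [heq3] at hadd
    injection hadd with hx3 hy3
    have hx3' : X (n+1) = (Mordell m).addX (X n) (X 1) L := hx3
    have hy3' : Y (n+1) = (Mordell m).addY (X n) (X 1) (Y n) L := hy3
    rw [MordellAux.mordell_addX] at hx3'
    rw [MordellAux.mordell_addY] at hy3'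
    refine ⟨L, ν, l₁, l₂, ?_, ?_, ?_, ?_⟩
    · rw [hy3', hx3']
      linear_combination l₁
    · rw [hx3']; ring
    · rw [hx3']; linear_combination V2
    · rw [hx3']; linear_combination V3
  -- notation for the three states
  have hvXn : ∀ k, 1 ≤ k → padicValRat p (X k) ≤ 0 ∨ 1 ≤ padicValRat p (X k) := fun k _ => by omega
  -- singular-point structure
  have hsv : ∀ k, 1 ≤ k → 1 ≤ padicValRat p (X k) → e ≤ padicValRat p (X k) ∧ padicValRat p (Y k) = e := fun k hk h =>
    MordellAux.sing_val hD hDne he1 he2 (hX0 k hk) (hY0 k hk) (hE k hk) h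
  -- the main invariant
  have main : ∀ n, 1 ≤ n →
      ((1 ≤ padicValRat p (X 1)) →
        ((n % 3 = 0 → padicValRat p (X n) ≤ 0) ∧
         (n % 3 = 1 → 1 ≤ padicValRat p (X n) ∧ (Y n - Y 1 = 0 ∨ e+1 ≤ padicValRat p (Y n - Y 1))) ∧
         (n % 3 = 2 → 1 ≤ padicValRat p (X n) ∧ (Y n + Y 1 = 0 ∨ e+1 ≤ padicValRat p (Y n + Y 1))))) ∧
      ((padicValRat p (X 1) ≤ 0) → padicValRat p (X n) ≤ 0) := by
    intro n hn
    induction n, hn using Nat.le_induction with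
    | base =>
      refine ⟨fun h1 => ⟨fun h => by omega, fun _ => ⟨h1, Or.inl (sub_self _)⟩,
        fun h => by omega⟩, fun h => h⟩
    | succ n hn ih =>
      obtain ⟨L, ν, l₁, l₂, l₃, V1, V2, V3⟩ := step n hn
      have hx₁0 := hX0 n hn
      have hx₂0 := hX0 1 le_rfl
      have hx₃0 := hX0 (n+1) (by omega)
      have hy₁0 := hY0 n hn
      have hy₂0 := hY0 1 le_rfl
      have hy₃0 : (-Y (n+1)) ≠ 0 := neg_ne_zero.2 (hY0 (n+1) (by omega))
      have hEn := hE n hn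
      have hE1 := hE 1 le_rfl
      have hE3 : (-Y (n+1))^2 = (X (n+1))^3 - D := by
        rw [neg_sq]; exact hE (n+1) (by omega)
      constructor
      · -- singular case
        intro h1
        have IH := (ih.1) h1
        have hmod : n % 3 = 0 ∨ n % 3 = 1 ∨ n % 3 = 2 := by omega
        rcases hmod with hmod | hmod | hmod
        · -- n ≡ 0 : nonsingular + singular = singular, same component as Q
          have hns : padicValRat p (X n) ≤ 0 := IH.1 hmod
          -- X (n+1) is singular
          have hsing3 : 1 ≤ padicValRat p (X (n+1)) := by
            by_contra hc
            push_neg at hc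
            have hc' : padicValRat p (X (n+1)) ≤ 0 := by omega
            have V1' : X n + X (n+1) + X 1 = L^2 := by linear_combination V1
            have V2' : X n * X (n+1) + X n * X 1 + X (n+1) * X 1 = -(2*L*ν) := by
              linear_combination V2
            have V3' : X n * X (n+1) * X 1 = ν^2 + D := by linear_combination V3
            exact MordellAux.core_A hD he1 hv2 hx₁0 hx₃0 hx₂0 V1' V2' V3' hns hc' h1
          have hopp := MordellAux.core_E hD hDne he1 he2 hx₁0 hx₂0 hx₃0 hy₂0 hy₃0
            hE1 hE3 l₂ l₃ V1 V2 hns h1 hsing3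
          refine ⟨fun h => by omega, fun _ => ⟨hsing3, ?_⟩, fun h => by omega⟩
          rcases hopp with h | h
          · left; linarith
          · right
            have hrw : Y 1 + -Y (n+1) = -(Y (n+1) - Y 1) := by ring
            rw [hrw, padicValRat.neg] at h
            exact h
        · -- n ≡ 1 : singular + singular, same component : result singular, opposite
          obtain ⟨hsn, hsame⟩ := IH.2.1 hmod
          obtain ⟨-, heyn⟩ := hsv n hn hsn
          obtain ⟨-, hey1⟩ := hsv 1 le_rfl h1
          -- padicValRat p (Y n + Y 1) = e
          have h2y : (2*Y 1 : ℚ) ≠ 0 := mul_ne_zero two_ne_zero hy₂0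
          have hv2y : padicValRat p (2*Y 1) = e := by
            show padicValRat p (2*Y 1) = e
            rw [padicValRat.mul two_ne_zero hy₂0, hv2, hey1]; omega
          have hstr := MordellAux.v_add_strict (p := p) (a := 2*Y 1) (b := Y n - Y 1) h2y
            (by
              rcases hsame with h | h
              · exact Or.inl h
              · right; rw [hv2y]; omega)
          have hrw : 2*Y 1 + (Y n - Y 1) = Y n + Y 1 := by ring
          rw [hrw, hv2y] at hstr
          obtain ⟨hyy0, hvyy⟩ := hstr
          have hsing3 : 1 ≤ padicValRat p (X (n+1)) :=
            MordellAux.core_C hD hDne he1 he2 hx₁0 hx₂0 hx₃0 hy₁0 hy₂0 hEn hE1 l₁ l₂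
              V1 V2 hsn h1 hyy0 hvyy
          -- all three singular: third point same component, so (n+1)-point opposite
          have V1' : X (n+1) + X 1 + X n = L^2 := by linear_combination V1
          have hD3 := MordellAux.core_D hD hDne he1 he2 hx₃0 hx₂0 hx₁0 hy₃0 hy₂0
            hE3 hE1 l₃ l₂ V1' hsing3 h1 hsn
          refine ⟨fun h => by omega, fun h => by omega, fun _ => ⟨hsing3, ?_⟩⟩
          rcases hD3 with h | h
          · left; linarith
          · right
            have hrw : -Y (n+1) - Y 1 = -(Y (n+1) + Y 1) := by ring
            rw [hrw, padicValRat.neg] at h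
            exact h
        · -- n ≡ 2 : singular + singular, opposite components : result nonsingular
          obtain ⟨hsn, hopp⟩ := IH.2.2 hmod
          have hns3 : padicValRat p (X (n+1)) ≤ 0 := by
            by_contra hc
            push_neg at hc
            have hc' : 1 ≤ padicValRat p (X (n+1)) := by omega
            exact MordellAux.core_opp hD hDne he1 he2 hv2 hx₁0 hx₂0 hx₃0 hy₁0 hy₂0
              hEn hE1 l₁ l₂ V1 V2 hsn h1 hopp hc'
          exact ⟨fun _ => hns3, fun h => by omega, fun h => by omega⟩
      · -- nonsingular case
        intro h1
        have hnsn : padicValRat p (X n) ≤ 0 := ih.2 h1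
        by_contra hc
        push_neg at hc
        have hc' : 1 ≤ padicValRat p (X (n+1)) := by omega
        exact MordellAux.core_A hD he1 hv2 hx₁0 hx₂0 hx₃0 V1 V2 V3 hnsn h1 hc'
  -- conclude
  intro n hn
  rw [hdvd_iff n hn, hdvd_iff 1 le_rfl]
  rcases le_or_gt (padicValRat p (X 1)) 0 with h1 | h1
  · have hns := (main n hn).2 h1
    constructor
    · intro h; omega
    · rintro ⟨h, -⟩; omega
  · have h1' : 1 ≤ padicValRat p (X 1) := h1
    obtain ⟨g0, g1, g2⟩ := (main n hn).1 h1'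
    constructor
    · intro hsing
      refine ⟨h1', fun hdvd => ?_⟩
      have hmod : n % 3 = 0 := by omega
      have := g0 hmod
      omega
    · rintro ⟨-, hnd⟩
      have hmod : n % 3 = 1 ∨ n % 3 = 2 := by omega
      rcases hmod with hmod | hmod
      · exact (g1 hmod).1
      · exact (g2 hmod).1
end

section
/- Let m be a nonzero cube-free integer, let Q be a point of infinite order on E: y^2 = x^3 - 432m^2 with Q = (A_1/B_1^2, C_1/B_1^3) in lowest terms, set D = -432m^2, g = gcd(A_1^3, 4D) > 0, s = A_1^3/g and t = 4D·B_1^6/g. Then: (i) for every prime p ≥ 5 dividing both A_1 and D, one has ord_p(s) > 0 = ord_p(t); and (ii) for every prime p ≥ 5, ord_p(t) is even. -/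
open WeierstrassCurve

section Helpers

variable {p : ℕ} [hp : Fact p.Prime]

theorem my_padicValInt_pow {a : ℤ} (n : ℕ) (ha : a ≠ 0) :
    padicValInt p (a ^ n) = n * padicValInt p a := by
  simp only [padicValInt, Int.natAbs_pow]
  exact padicValNat.pow _ n

theorem my_padicValInt_gcd {a b : ℤ} (ha : a ≠ 0) (hb : b ≠ 0) :
    padicValInt p (Int.gcd a b : ℤ) = min (padicValInt p a) (padicValInt p b) := by
  have ha' : a.natAbs ≠ 0 := Int.natAbs_ne_zero.mpr ha
  have hb' : b.natAbs ≠ 0 := Int.natAbs_ne_zero.mpr hb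
  have h2 : (Nat.gcd a.natAbs b.natAbs).factorization p
      = min (a.natAbs.factorization p) (b.natAbs.factorization p) := by
    rw [Nat.factorization_gcd ha' hb']
    exact Finsupp.inf_apply _ _ _
  rw [padicValInt.of_nat]
  show padicValNat p (Nat.gcd a.natAbs b.natAbs) = _
  rw [← Nat.factorization_def _ hp.out, h2, Nat.factorization_def _ hp.out,
    Nat.factorization_def _ hp.out]
  rfl

theorem my_padicValInt_div {a b : ℤ} (hb : b ≠ 0) (h : b ∣ a) (ha : a ≠ 0) :
    padicValInt p (a / b) = padicValInt p a - padicValInt p b := by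
  obtain ⟨c, rfl⟩ := h
  have hc : c ≠ 0 := by rintro rfl; simp at ha
  rw [Int.mul_ediv_cancel_left _ hb, padicValInt.mul hb hc]
  omega

end Helpers

theorem gcd_claim_s_t
    (m : ℤ) (hm : m ≠ 0) (hcf : CubeFree m)
    (Q : (Mordell m).Point) (hQ : ∀ k : ℕ, 0 < k → k • Q ≠ 0)
    (A B C : ℕ → ℤ)
    (hB : ∀ n : ℕ, 1 ≤ n → 1 ≤ B n)
    (hAB : ∀ n : ℕ, 1 ≤ n → Int.gcd (A n) (B n) = 1)
    (hCB : ∀ n : ℕ, 1 ≤ n → Int.gcd (C n) (B n) = 1)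
    (hABC : ∀ n : ℕ, 1 ≤ n →
      ∃ h : (Mordell m).Nonsingular ((A n : ℚ) / (B n : ℚ) ^ 2) ((C n : ℚ) / (B n : ℚ) ^ 3),
        n • Q = WeierstrassCurve.Affine.Point.some _ _ h)
    (g s t : ℤ)
    (hg : g = Int.gcd (A 1 ^ 3) (4 * (-432 * m ^ 2)))
    (hs : s = A 1 ^ 3 / g)
    (ht : t = 4 * (-432 * m ^ 2) * B 1 ^ 6 / g) :
    0 < g ∧
      (∀ p : ℕ, p.Prime → 5 ≤ p → (p : ℤ) ∣ A 1 → (p : ℤ) ∣ (-432 * m ^ 2) →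
        (p : ℤ) ∣ s ∧ ¬ (p : ℤ) ∣ t) ∧
      (∀ p : ℕ, p.Prime → 5 ≤ p → Even (padicValInt p t)) := by
  obtain ⟨hns, hQ1⟩ := hABC 1 le_rfl
  have hB1 : 1 ≤ B 1 := hB 1 le_rfl
  have hB1Z : B 1 ≠ 0 := by omega
  have hB1Q : ((B 1 : ℚ)) ≠ 0 := Int.cast_ne_zero.mpr hB1Z
  have hm2 : (0 : ℤ) < m ^ 2 := by positivity
  have hD : (-432 * m ^ 2 : ℤ) ≠ 0 := by nlinarith
  have h4D : (4 * (-432 * m ^ 2) : ℤ) ≠ 0 := by nlinarith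
  -- the integral Weierstrass equation
  have heq : (C 1) ^ 2 = (A 1) ^ 3 + (-432 * m ^ 2) * (B 1) ^ 6 := by
    have h' := hns.left
    rw [WeierstrassCurve.Affine.equation_iff] at h'
    simp only [Mordell] at h'
    have h'' : ((C 1 : ℚ)) ^ 2 = (A 1 : ℚ) ^ 3 + (-432 * (m : ℚ) ^ 2) * (B 1 : ℚ) ^ 6 := by
      field_simp at h'
      have hB6 : ((B 1 : ℚ)) ^ 6 ≠ 0 := pow_ne_zero _ hB1Q
      apply mul_right_cancel₀ hB6
      linear_combination (B 1 : ℚ) ^ 6 * h'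
    exact_mod_cast h''
  have hA1 : A 1 ≠ 0 := by
    intro h0
    rw [h0] at heq
    have hB6 : (0 : ℤ) < B 1 ^ 6 := by positivity
    nlinarith [sq_nonneg (C 1)]
  have hC1 : C 1 ≠ 0 := by
    intro h0
    have hQQ : Q = WeierstrassCurve.Affine.Point.some _ _ hns := by
      rw [one_smul] at hQ1; exact hQ1
    have h2 : (2 : ℕ) • Q = 0 := by
      rw [two_nsmul, hQQ]
      apply WeierstrassCurve.Affine.Point.add_self_of_Y_eq
      simp [WeierstrassCurve.Affine.negY, Mordell, h0]
    exact hQ 2 (by norm_num) h2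
  have hA3 : A 1 ^ 3 ≠ 0 := pow_ne_zero _ hA1
  have hC2 : C 1 ^ 2 ≠ 0 := pow_ne_zero _ hC1
  have hDB : (-432 * m ^ 2) * (B 1) ^ 6 ≠ 0 := mul_ne_zero hD (pow_ne_zero _ hB1Z)
  -- primes ≥ 5 do not divide 1728
  have hsmall : ∀ p : ℕ, p.Prime → 5 ≤ p → ¬ p ∣ 1728 := by
    intro p pp hp5 hdvd
    have h1 : p ∣ 2 ^ 6 * 3 ^ 3 := by norm_num at hdvd ⊢; exact hdvd
    rcases (Nat.Prime.dvd_mul pp).mp h1 with h | h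
    · have := Nat.le_of_dvd (by norm_num) (pp.dvd_of_dvd_pow h); omega
    · have := Nat.le_of_dvd (by norm_num) (pp.dvd_of_dvd_pow h); omega
  -- key parity lemma from the equation
  have hEven : ∀ p : ℕ, p.Prime →
      padicValInt p (A 1 ^ 3) < padicValInt p ((-432 * m ^ 2) * (B 1) ^ 6) →
      Even (padicValInt p (A 1 ^ 3)) := by
    intro p pp hlt
    haveI := Fact.mk pp
    set n := padicValInt p (A 1 ^ 3) with hn
    have h1 : (p : ℤ) ^ n ∣ A 1 ^ 3 := padicValInt_dvd _
    have h2 : (p : ℤ) ^ n ∣ (-432 * m ^ 2) * (B 1) ^ 6 :=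
      (padicValInt_dvd_iff _ _).mpr (Or.inr hlt.le)
    have h3 : (p : ℤ) ^ n ∣ C 1 ^ 2 := heq ▸ dvd_add h1 h2
    have h4 : n ≤ padicValInt p (C 1 ^ 2) := ((padicValInt_dvd_iff _ _).mp h3).resolve_left hC2
    have h5 : padicValInt p (C 1 ^ 2) ≤ n := by
      by_contra h5
      push_neg at h5
      have hc : (p : ℤ) ^ (n + 1) ∣ C 1 ^ 2 := (padicValInt_dvd_iff _ _).mpr (Or.inr h5)
      have hd : (p : ℤ) ^ (n + 1) ∣ (-432 * m ^ 2) * (B 1) ^ 6 :=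
        (padicValInt_dvd_iff _ _).mpr (Or.inr hlt)
      have he : (p : ℤ) ^ (n + 1) ∣ A 1 ^ 3 := by
        have hx : A 1 ^ 3 = C 1 ^ 2 - (-432 * m ^ 2) * (B 1) ^ 6 := by linarith
        rw [hx]; exact dvd_sub hc hd
      have := ((padicValInt_dvd_iff _ _).mp he).resolve_left hA3
      omega
    have hsq : padicValInt p (C 1 ^ 2) = 2 * padicValInt p (C 1) :=
      my_padicValInt_pow 2 hC1
    exact ⟨padicValInt p (C 1), by omega⟩
  -- g is positive
  have hgdvdA : g ∣ A 1 ^ 3 := hg ▸ Int.gcd_dvd_left _ _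
  have hgdvd4D : g ∣ 4 * (-432 * m ^ 2) := hg ▸ Int.gcd_dvd_right _ _
  have hgne : g ≠ 0 := by
    rw [hg]
    simp only [ne_eq, Int.natCast_eq_zero, Int.gcd_eq_zero_iff]
    intro h
    exact h4D h.2
  have hgpos : 0 < g := by
    rw [hg]
    have : Int.gcd (A 1 ^ 3) (4 * (-432 * m ^ 2)) ≠ 0 := by
      intro h; exact h4D (Int.gcd_eq_zero_iff.mp h).2
    exact_mod_cast Nat.pos_of_ne_zero this
  have hsne : s ≠ 0 := by
    intro h0
    have := Int.ediv_mul_cancel hgdvdA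
    rw [← hs, h0, zero_mul] at this
    exact hA3 this.symm
  have hgdvdDB : g ∣ 4 * (-432 * m ^ 2) * B 1 ^ 6 := Dvd.dvd.mul_right hgdvd4D _
  have h4DB : 4 * (-432 * m ^ 2) * B 1 ^ 6 ≠ 0 := mul_ne_zero h4D (pow_ne_zero _ hB1Z)
  have htne : t ≠ 0 := by
    intro h0
    have := Int.ediv_mul_cancel hgdvdDB
    rw [← ht, h0, zero_mul] at this
    exact h4DB this.symm
  -- valuation computations for primes ≥ 5
  have main : ∀ p : ℕ, p.Prime → 5 ≤ p →
      padicValInt p (A 1 ^ 3) = 3 * padicValInt p (A 1) ∧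
      padicValInt p ((-432 * m ^ 2) * (B 1) ^ 6)
        = 2 * padicValInt p m + 6 * padicValInt p (B 1) ∧
      padicValInt p s = 3 * padicValInt p (A 1)
        - min (3 * padicValInt p (A 1)) (2 * padicValInt p m) ∧
      padicValInt p t = 2 * padicValInt p m + 6 * padicValInt p (B 1)
        - min (3 * padicValInt p (A 1)) (2 * padicValInt p m) := by
    intro p pp hp5
    haveI := Fact.mk pp
    have hnd1728 : ¬ (p : ℤ) ∣ (-1728 : ℤ) := by
      intro h
      exact hsmall p pp hp5 (by exact_mod_cast dvd_neg.mp h)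
    have hnd432 : ¬ (p : ℤ) ∣ (-432 : ℤ) := by
      intro h
      have h' : p ∣ 432 := by exact_mod_cast dvd_neg.mp h
      exact hsmall p pp hp5 (h'.trans (by norm_num))
    have vA3 : padicValInt p (A 1 ^ 3) = 3 * padicValInt p (A 1) :=
      my_padicValInt_pow 3 hA1
    have vm2 : padicValInt p (m ^ 2) = 2 * padicValInt p m := my_padicValInt_pow 2 hm
    have vB6 : padicValInt p (B 1 ^ 6) = 6 * padicValInt p (B 1) := my_padicValInt_pow 6 hB1Z
    have hm2ne : (m ^ 2 : ℤ) ≠ 0 := pow_ne_zero _ hm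
    have vD : padicValInt p (-432 * m ^ 2) = 2 * padicValInt p m := by
      rw [padicValInt.mul (by norm_num) hm2ne, padicValInt.eq_zero_of_not_dvd hnd432, vm2]
      omega
    have v4D : padicValInt p (4 * (-432 * m ^ 2)) = 2 * padicValInt p m := by
      have hE : (4 * (-432 * m ^ 2) : ℤ) = (-1728) * m ^ 2 := by ring
      rw [hE, padicValInt.mul (by norm_num) hm2ne,
        padicValInt.eq_zero_of_not_dvd hnd1728, vm2]
      omega
    have vDB : padicValInt p ((-432 * m ^ 2) * (B 1) ^ 6)
        = 2 * padicValInt p m + 6 * padicValInt p (B 1) := by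
      rw [padicValInt.mul hD (pow_ne_zero _ hB1Z), vD, vB6]
    have vg : padicValInt p g
        = min (3 * padicValInt p (A 1)) (2 * padicValInt p m) := by
      rw [hg, my_padicValInt_gcd hA3 h4D, vA3, v4D]
    have vs : padicValInt p s = 3 * padicValInt p (A 1)
        - min (3 * padicValInt p (A 1)) (2 * padicValInt p m) := by
      rw [hs, my_padicValInt_div hgne hgdvdA hA3, vA3, vg]
    have v4DB : padicValInt p (4 * (-432 * m ^ 2) * B 1 ^ 6)
        = 2 * padicValInt p m + 6 * padicValInt p (B 1) := by
      rw [padicValInt.mul h4D (pow_ne_zero _ hB1Z), v4D, vB6]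
    have vt : padicValInt p t = 2 * padicValInt p m + 6 * padicValInt p (B 1)
        - min (3 * padicValInt p (A 1)) (2 * padicValInt p m) := by
      rw [ht, my_padicValInt_div hgne hgdvdDB h4DB, v4DB, vg]
    exact ⟨vA3, vDB, vs, vt⟩
  refine ⟨hgpos, ?_, ?_⟩
  · -- part (i)
    intro p pp hp5 hpA hpD
    haveI := Fact.mk pp
    obtain ⟨vA3, vDB, vs, vt⟩ := main p pp hp5
    have ppZ : Prime (p : ℤ) := Int.prime_iff_natAbs_prime.mpr (by simpa using pp)
    have hnotunit : ¬ IsUnit ((p : ℤ)) := ppZ.not_unit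
    have hpm : (p : ℤ) ∣ m := by
      rcases ppZ.dvd_mul.mp hpD with h | h
      · exfalso
        have h' : p ∣ 432 := by exact_mod_cast dvd_neg.mp h
        exact hsmall p pp hp5 (h'.trans (by norm_num))
      · exact ppZ.dvd_of_dvd_pow h
    have hb1 : 1 ≤ padicValInt p m :=
      ((padicValInt_dvd_iff 1 m).mp (by rwa [pow_one])).resolve_left hm
    have ha1 : 1 ≤ padicValInt p (A 1) := by
      have := (padicValInt_dvd_iff 1 (A 1)).mp (by rwa [pow_one])
      rcases this with h | h
      · exact absurd h hA1
      · exact h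
    have hb2 : padicValInt p m ≤ 2 := by
      by_contra hb
      push_neg at hb
      have h3 : (p : ℤ) ^ 3 ∣ m :=
        dvd_trans (pow_dvd_pow _ (by omega)) (padicValInt_dvd m)
      have := hcf _ h3
      exact hnotunit this
    have hnB : ¬ (p : ℤ) ∣ B 1 := by
      intro hB'
      have : (p : ℤ) ∣ (Int.gcd (A 1) (B 1) : ℤ) := Int.dvd_coe_gcd hpA hB'
      rw [hAB 1 le_rfl] at this
      exact hnotunit (isUnit_of_dvd_one (by exact_mod_cast this))
    have hc0 : padicValInt p (B 1) = 0 := padicValInt.eq_zero_of_not_dvd hnB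
    -- 2 * v_p(m) < 3 * v_p(A 1)
    have hkey : 2 * padicValInt p m < 3 * padicValInt p (A 1) := by
      by_contra hk
      push_neg at hk
      have ha1' : padicValInt p (A 1) = 1 := by omega
      have hb2' : padicValInt p m = 2 := by omega
      have hlt : padicValInt p (A 1 ^ 3) < padicValInt p ((-432 * m ^ 2) * (B 1) ^ 6) := by
        rw [vA3, vDB, ha1', hb2', hc0]
        norm_num
      obtain ⟨k, hk2⟩ := hEven p pp hlt
      rw [vA3, ha1'] at hk2
      omega
    constructor
    · have h1 : 1 ≤ padicValInt p s := by
        rw [vs]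
        omega
      have := (padicValInt_dvd_iff 1 s).mpr (Or.inr h1)
      rwa [pow_one] at this
    · intro hpt
      have h1 : 1 ≤ padicValInt p t :=
        ((padicValInt_dvd_iff 1 t).mp (by rwa [pow_one])).resolve_left htne
      rw [vt, hc0] at h1
      omega
  · -- part (ii)
    intro p pp hp5
    haveI := Fact.mk pp
    obtain ⟨vA3, vDB, vs, vt⟩ := main p pp hp5
    have ppZ : Prime (p : ℤ) := Int.prime_iff_natAbs_prime.mpr (by simpa using pp)
    rcases le_or_gt (2 * padicValInt p m) (3 * padicValInt p (A 1)) with h | h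
    · have : padicValInt p t = 6 * padicValInt p (B 1) := by
        rw [vt, min_eq_right h]
        omega
      rw [this]
      exact ⟨3 * padicValInt p (B 1), by ring⟩
    · rcases Nat.eq_zero_or_pos (padicValInt p (B 1)) with hc | hc
      · -- B-valuation zero: use the parity lemma
        have hlt : padicValInt p (A 1 ^ 3) < padicValInt p ((-432 * m ^ 2) * (B 1) ^ 6) := by
          rw [vA3, vDB, hc]
          omega
        obtain ⟨k, hk⟩ := hEven p pp hlt
        rw [vA3] at hk
        have hmin : min (3 * padicValInt p (A 1)) (2 * padicValInt p m)
            = 3 * padicValInt p (A 1) := min_eq_left h.le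
        rw [vt, hmin, hc]
        exact ⟨padicValInt p m - k, by omega⟩
      · -- p divides B 1, so not A 1
        have hpB : (p : ℤ) ∣ B 1 := by
          have := (padicValInt_dvd_iff 1 (B 1)).mpr (Or.inr hc)
          rwa [pow_one] at this
        have hnA : ¬ (p : ℤ) ∣ A 1 := by
          intro hA'
          have hd : (p : ℤ) ∣ (Int.gcd (A 1) (B 1) : ℤ) := Int.dvd_coe_gcd hA' hpB
          rw [hAB 1 le_rfl] at hd
          exact ppZ.not_unit (isUnit_of_dvd_one (by exact_mod_cast hd))
        have ha0 : padicValInt p (A 1) = 0 := padicValInt.eq_zero_of_not_dvd hnA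
        have hmin : min (3 * padicValInt p (A 1)) (2 * padicValInt p m) = 0 := by
          rw [ha0]; simp
        rw [vt, hmin, Nat.sub_zero]
        exact ⟨padicValInt p m + 3 * padicValInt p (B 1), by ring⟩
end

section
/- Let a, b, c be integers with a = b + c, a ≠ 0, c < 0, such that b and c are {2,3}-units (nonzero integers with no prime factor other than 2 and 3), gcd(b, c) = 1, and at least one of a, 2a, 3a, 6a is a perfect square. Then (a, b, c) is one of the following ten triples: (1, 2, -1), (1, 4, -3), (1, 3, -2), (1, 9, -8), (25, 27, -2), (49, 81, -32), (2, 3, -1), (8, 9, -1), (242, 243, -1), (3, 4, -1). -/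
set_option linter.unnecessarySeqFocus false
set_option linter.unusedVariables false
set_option maxHeartbeats 1000000

/-- A `{2,3}`-unit: a nonzero integer whose only prime divisors are `2` and `3`. -/
def TwoThreeUnit (z : ℤ) : Prop :=
  z ≠ 0 ∧ ∀ p : ℕ, p.Prime → (p : ℤ) ∣ z → p = 2 ∨ p = 3

namespace TTU23

abbrev Z2 := Zsqrtd (-2)

def th : Z2 := ⟨1, 1⟩

lemma mk_re (p q : ℤ) : (⟨p,q⟩:Z2).re = p := rfl
lemma mk_im (p q : ℤ) : (⟨p,q⟩:Z2).im = q := rfl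

lemma coe_mul (D : ℤ) (z : Z2) : (D:Z2)*z = ⟨D*z.re, D*z.im⟩ := by
  ext <;> simp [Zsqrtd.re_mul, Zsqrtd.im_mul]
lemma one_add_mk (p q : ℤ) : (1:Z2) + ⟨p, q⟩ = ⟨1+p, q⟩ := by
  ext <;> simp
lemma mk_add_mk (p q r s : ℤ) : (⟨p,q⟩:Z2) + ⟨r,s⟩ = ⟨p+r, q+s⟩ := by
  ext <;> simp
lemma mk_mul_mk (A B p q : ℤ) : (⟨A,B⟩ : Z2) * (⟨p,q⟩ : Z2) = ⟨A*p - 2*B*q, A*q + B*p⟩ := by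
  ext <;> simp [Zsqrtd.re_mul, Zsqrtd.im_mul] <;> ring
lemma mk_eq_mk {p q r s : ℤ} : (⟨p,q⟩:Z2) = ⟨r,s⟩ ↔ p = r ∧ q = s := by
  constructor
  · intro h; exact ⟨congrArg Zsqrtd.re h, congrArg Zsqrtd.im h⟩
  · rintro ⟨h1, h2⟩; rw [h1, h2]

lemma binom (c w : Z2) (s : ℕ) : ∃ z : Z2, (1 + c*w)^s = 1 + (s:Z2)*c*w + c^2*z := by
  induction s with
  | zero => exact ⟨0, by push_cast; ring⟩
  | succ k ih =>
    obtain ⟨z, hz⟩ := ih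
    refine ⟨(k:Z2)*w^2 + z + c*z*w, ?_⟩
    rw [pow_succ, hz]
    push_cast
    ring

lemma struct (t : ℕ) : ∃ x y : ℤ, th^(2^(t+3)) = ⟨1 + 16*2^t*x, 8*2^t*y⟩ ∧ x % 4 = 1 ∧ y % 8 = 7 := by
  induction t with
  | zero => exact ⟨1, 7, by decide, by decide, by decide⟩
  | succ k ih =>
    obtain ⟨x, y, hs, hx, hy⟩ := ih
    refine ⟨x + 4*2^k*(2*x^2 - y^2), y + 16*2^k*(x*y), ?_, ?_, ?_⟩
    · have h1 : (2:ℕ)^(k+1+3) = 2^(k+3)*2 := by ring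
      rw [h1, pow_mul, hs, pow_two, mk_mul_mk, mk_eq_mk]
      have h2 : (2:ℤ)^(k+1) = 2^k*2 := by ring
      rw [h2]
      exact ⟨by ring, by ring⟩
    · obtain ⟨K, hK⟩ : ∃ K, x + 4*2^k*(2*x^2 - y^2) = x + 4*K :=
        ⟨2^k*(2*x^2 - y^2), by ring⟩
      rw [hK]; omega
    · obtain ⟨K, hK⟩ : ∃ K, y + 16*2^k*(x*y) = y + 8*K := ⟨2^k*(x*y)*2, by ring⟩
      rw [hK]; omega

lemma powkey (t s : ℕ) : ∃ x y zr zi : ℤ, x % 4 = 1 ∧ y % 8 = 7 ∧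
    th^(2^(t+3)*s) = ⟨1 + 8*2^t*((s:ℤ)*(2*x)) + 64*(2^t)^2*zr,
      8*2^t*((s:ℤ)*y) + 64*(2^t)^2*zi⟩ := by
  obtain ⟨x, y, hs, hx, hy⟩ := struct t
  obtain ⟨C, hC0⟩ : ∃ C : ℤ, C = 8*2^t := ⟨_, rfl⟩
  have hC : th^(2^(t+3)) = 1 + (C : Z2) * (⟨2*x, y⟩ : Z2) := by
    rw [hs, coe_mul, one_add_mk, mk_eq_mk]
    subst hC0; exact ⟨by ring, by ring⟩
  obtain ⟨z, hz⟩ := binom (C : Z2) (⟨2*x, y⟩ : Z2) s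
  refine ⟨x, y, z.re, z.im, hx, hy, ?_⟩
  rw [pow_mul, hC, hz]
  have h1 : ((s:Z2))*(C:Z2) = (((s:ℤ)*C : ℤ) : Z2) := by push_cast; ring
  have h2 : ((C:Z2))^2 = ((C^2 : ℤ) : Z2) := by push_cast; ring
  rw [h1, h2, coe_mul, coe_mul, one_add_mk, mk_add_mk, mk_eq_mk]
  subst hC0; exact ⟨by push_cast; ring, by push_cast; ring⟩

lemma dvd2_mul {s D : ℤ} (h : (2:ℤ) ∣ s*D) (hs : s % 2 = 1) : (2:ℤ) ∣ D := by
  rcases (Int.prime_two.dvd_mul).1 h with h2 | h2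
  · omega
  · exact h2

lemma coreD16 {U s D M A v : ℤ} (hU : 1 ≤ U) (hs : s % 2 = 1)
    (hD : D % 4 = 1 ∨ D % 4 = 3 ∨ D % 4 = 2) (hA : A = 1 ∨ A = -1)
    (hv : v = A + 16*U*s*D + 64*U^2*M) (h1 : v = 1 ∨ v = -1) : False := by
  have hvv : v - A = 16*U*(s*D + 4*U*M) := by rw [hv]; ring
  have hcase : v - A = 0 ∨ v - A = 2 ∨ v - A = -2 := by
    rcases h1 with h | h <;> rcases hA with h' | h' <;> omega
  rcases hcase with h0 | h0 | h0
  · -- 16U(sD+4UM)=0 ⇒ sD = -4UM ⇒ 4 ∣ sD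
    have hw : s*D + 4*U*M = 0 := by
      rcases mul_eq_zero.1 (by omega : (16*U) * (s*D + 4*U*M) = 0) with h2 | h2
      · omega
      · exact h2
    have h4 : (2:ℤ) ∣ D := dvd2_mul ⟨-2*U*M, by linarith⟩ hs
    obtain ⟨E, hE⟩ := h4
    have hEodd : E % 2 = 1 := by omega
    have h5 : (2:ℤ) ∣ E := dvd2_mul (D := E) ⟨-U*M, by rw [hE] at hw; linarith⟩ hs
    omega
  · have : (16:ℤ) ∣ 2 := ⟨U*(s*D + 4*U*M), by linarith⟩
    omega
  · have : (16:ℤ) ∣ 2 := ⟨-(U*(s*D + 4*U*M)), by linarith⟩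
    omega

lemma coreD8 {U s D M B v : ℤ} (hU : 1 ≤ U) (hs : s % 2 = 1)
    (hD : D % 2 = 1) (hB : B = 1 ∨ B = -1)
    (hv : v = B + 8*U*s*D + 64*U^2*M) (h1 : v = 1 ∨ v = -1) : False := by
  have hvv : v - B = 8*U*(s*D + 8*U*M) := by rw [hv]; ring
  have hcase : v - B = 0 ∨ v - B = 2 ∨ v - B = -2 := by
    rcases h1 with h | h <;> rcases hB with h' | h' <;> omega
  rcases hcase with h0 | h0 | h0
  · have hw : s*D + 8*U*M = 0 := by
      rcases mul_eq_zero.1 (by omega : (8*U) * (s*D + 8*U*M) = 0) with h2 | h2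
      · omega
      · exact h2
    have h4 : (2:ℤ) ∣ D := dvd2_mul ⟨-4*U*M, by linarith⟩ hs
    omega
  · have : (8:ℤ) ∣ 2 := ⟨U*(s*D + 8*U*M), by linarith⟩
    omega
  · have : (8:ℤ) ∣ 2 := ⟨-(U*(s*D + 8*U*M)), by linarith⟩
    omega

lemma crude16 {U s D M A v : ℤ} (hU : 1 ≤ U)
    (hA : ¬ ((16:ℤ) ∣ (1 - A)) ∧ ¬ ((16:ℤ) ∣ (-1 - A)))
    (hv : v = A + 16*U*s*D + 64*U^2*M) (h1 : v = 1 ∨ v = -1) : False := by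
  have h16 : (16:ℤ) ∣ (v - A) := ⟨U*(s*D + 4*U*M), by rw [hv]; ring⟩
  rcases h1 with h | h
  · exact hA.1 (by rw [← h]; exact h16)
  · exact hA.2 (by rw [← h]; exact h16)

lemma crude8 {U s D M B v : ℤ} (hU : 1 ≤ U)
    (hB : ¬ ((8:ℤ) ∣ (1 - B)) ∧ ¬ ((8:ℤ) ∣ (-1 - B)))
    (hv : v = B + 8*U*s*D + 64*U^2*M) (h1 : v = 1 ∨ v = -1) : False := by
  have h8 : (8:ℤ) ∣ (v - B) := ⟨U*(s*D + 8*U*M), by rw [hv]; ring⟩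
  rcases h1 with h | h
  · exact hB.1 (by rw [← h]; exact h8)
  · exact hB.2 (by rw [← h]; exact h8)

lemma split_setup {n : ℕ} (hn : ¬ n < 8) :
    ∃ t s : ℕ, ¬ 2 ∣ s ∧ n = 2^(t+3)*s + n % 8 := by
  push_neg at hn
  have hq0 : n / 8 ≠ 0 := by omega
  obtain ⟨t, s, hs2, hq⟩ := Nat.exists_eq_pow_mul_and_not_dvd hq0 2 (by norm_num)
  refine ⟨t, s, hs2, ?_⟩
  have hpow : (2:ℕ)^(t+3) = 8*2^t := by rw [pow_add]; ring
  rw [hpow, mul_assoc, ← hq]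
  omega

lemma main_a (n : ℕ) (h : (th^n).re = 1 ∨ (th^n).re = -1) :
    n = 0 ∨ n = 1 ∨ n = 2 ∨ n = 5 := by
  by_cases hn : n < 8
  · interval_cases n <;> revert h <;> decide
  · exfalso
    obtain ⟨t, s, hs2, hne⟩ := split_setup hn
    obtain ⟨x, y, zr, zi, hx, hy, hkey⟩ := powkey t s
    have hsplit : th^n = th^(2^(t+3)*s) * th^(n % 8) := by rw [← pow_add, ← hne]
    rw [hkey] at hsplit
    have hs1 : (s:ℤ) % 2 = 1 := by omega
    have hU : (1:ℤ) ≤ 2^t := one_le_pow₀ (by norm_num)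
    have h8 : n % 8 = 0 ∨ n % 8 = 1 ∨ n % 8 = 2 ∨ n % 8 = 3 ∨ n % 8 = 4 ∨
        n % 8 = 5 ∨ n % 8 = 6 ∨ n % 8 = 7 := by omega
    rcases h8 with h8 | h8 | h8 | h8 | h8 | h8 | h8 | h8 <;> rw [h8] at hsplit
    · rw [show th^(0:ℕ) = ⟨1,0⟩ from by decide, mk_mul_mk] at hsplit
      rw [hsplit, mk_re] at h
      exact coreD16 (M := zr) hU hs1 (Or.inl hx) (Or.inl rfl) (by ring) h
    · rw [show th^(1:ℕ) = ⟨1,1⟩ from by decide, mk_mul_mk] at hsplit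
      rw [hsplit, mk_re] at h
      exact coreD16 (D := x - y) (M := zr - 2*zi) hU hs1 (by omega) (Or.inl rfl) (by ring) h
    · rw [show th^(2:ℕ) = ⟨-1,2⟩ from by decide, mk_mul_mk] at hsplit
      rw [hsplit, mk_re] at h
      exact coreD16 (D := -x - 2*y) (M := -zr - 4*zi) hU hs1 (by omega) (Or.inr rfl) (by ring) h
    · rw [show th^(3:ℕ) = ⟨-5,1⟩ from by decide, mk_mul_mk] at hsplit
      rw [hsplit, mk_re] at h
      exact crude16 (A := -5) (D := -5*x - y) (M := -5*zr - 2*zi) hU (by omega) (by ring) h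
    · rw [show th^(4:ℕ) = ⟨-7,-4⟩ from by decide, mk_mul_mk] at hsplit
      rw [hsplit, mk_re] at h
      exact crude16 (A := -7) (D := -7*x + 4*y) (M := -7*zr + 8*zi) hU (by omega) (by ring) h
    · rw [show th^(5:ℕ) = ⟨1,-11⟩ from by decide, mk_mul_mk] at hsplit
      rw [hsplit, mk_re] at h
      exact coreD16 (D := x + 11*y) (M := zr + 22*zi) hU hs1 (by omega) (Or.inl rfl) (by ring) h
    · rw [show th^(6:ℕ) = ⟨23,-10⟩ from by decide, mk_mul_mk] at hsplit
      rw [hsplit, mk_re] at h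
      exact crude16 (A := 23) (D := 23*x + 10*y) (M := 23*zr + 20*zi) hU (by omega) (by ring) h
    · rw [show th^(7:ℕ) = ⟨43,13⟩ from by decide, mk_mul_mk] at hsplit
      rw [hsplit, mk_re] at h
      exact crude16 (A := 43) (D := 43*x - 13*y) (M := 43*zr - 26*zi) hU (by omega) (by ring) h

lemma main_b (n : ℕ) (h : (th^n).im = 1 ∨ (th^n).im = -1) :
    n = 1 ∨ n = 3 := by
  by_cases hn : n < 8
  · interval_cases n <;> revert h <;> decide
  · exfalso
    obtain ⟨t, s, hs2, hne⟩ := split_setup hn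
    obtain ⟨x, y, zr, zi, hx, hy, hkey⟩ := powkey t s
    have hsplit : th^n = th^(2^(t+3)*s) * th^(n % 8) := by rw [← pow_add, ← hne]
    rw [hkey] at hsplit
    have hs1 : (s:ℤ) % 2 = 1 := by omega
    have hU : (1:ℤ) ≤ 2^t := one_le_pow₀ (by norm_num)
    have h8 : n % 8 = 0 ∨ n % 8 = 1 ∨ n % 8 = 2 ∨ n % 8 = 3 ∨ n % 8 = 4 ∨
        n % 8 = 5 ∨ n % 8 = 6 ∨ n % 8 = 7 := by omega
    rcases h8 with h8 | h8 | h8 | h8 | h8 | h8 | h8 | h8 <;> rw [h8] at hsplit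
    · rw [show th^(0:ℕ) = ⟨1,0⟩ from by decide, mk_mul_mk] at hsplit
      rw [hsplit, mk_im] at h
      exact crude8 (B := 0) (D := y) (M := zi) hU (by omega) (by ring) h
    · rw [show th^(1:ℕ) = ⟨1,1⟩ from by decide, mk_mul_mk] at hsplit
      rw [hsplit, mk_im] at h
      exact coreD8 (D := y + 2*x) (M := zi + zr) hU hs1 (by omega) (Or.inl rfl) (by ring) h
    · rw [show th^(2:ℕ) = ⟨-1,2⟩ from by decide, mk_mul_mk] at hsplit
      rw [hsplit, mk_im] at h
      exact crude8 (B := 2) (D := -y + 4*x) (M := -zi + 2*zr) hU (by omega) (by ring) h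
    · rw [show th^(3:ℕ) = ⟨-5,1⟩ from by decide, mk_mul_mk] at hsplit
      rw [hsplit, mk_im] at h
      exact coreD8 (D := -5*y + 2*x) (M := -5*zi + zr) hU hs1 (by omega) (Or.inl rfl) (by ring) h
    · rw [show th^(4:ℕ) = ⟨-7,-4⟩ from by decide, mk_mul_mk] at hsplit
      rw [hsplit, mk_im] at h
      exact crude8 (B := -4) (D := -7*y - 8*x) (M := -7*zi - 4*zr) hU (by omega) (by ring) h
    · rw [show th^(5:ℕ) = ⟨1,-11⟩ from by decide, mk_mul_mk] at hsplit
      rw [hsplit, mk_im] at h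
      exact crude8 (B := -11) (D := y - 22*x) (M := zi - 11*zr) hU (by omega) (by ring) h
    · rw [show th^(6:ℕ) = ⟨23,-10⟩ from by decide, mk_mul_mk] at hsplit
      rw [hsplit, mk_im] at h
      exact crude8 (B := -10) (D := 23*y - 20*x) (M := 23*zi - 10*zr) hU (by omega) (by ring) h
    · rw [show th^(7:ℕ) = ⟨43,13⟩ from by decide, mk_mul_mk] at hsplit
      rw [hsplit, mk_im] at h
      exact crude8 (B := 13) (D := 43*y + 26*x) (M := 43*zi + 13*zr) hU (by omega) (by ring) h

lemma not_both_three {x z : ℤ} (hco : IsCoprime x z) : ¬((3:ℤ) ∣ x ∧ (3:ℤ) ∣ z) := by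
  rintro ⟨h1, h2⟩
  have h := IsCoprime.isUnit_of_dvd' hco h1 h2
  rw [Int.isUnit_iff] at h
  omega

lemma th_re_succ (k : ℕ) : (th^(k+1)).re = (th^k).re - 2*(th^k).im := by
  rw [pow_succ]
  simp [th, Zsqrtd.re_mul]
  ring

lemma th_im_succ (k : ℕ) : (th^(k+1)).im = (th^k).re + (th^k).im := by
  rw [pow_succ]
  simp [th, Zsqrtd.im_mul]

lemma th_dvd3 (k : ℕ) (hk : 1 ≤ k) : (3:ℤ) ∣ (th^k).re - (th^k).im := by
  obtain ⟨j, rfl⟩ : ∃ j, k = j + 1 := ⟨k - 1, by omega⟩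
  rw [th_re_succ, th_im_succ]
  exact ⟨-(th^j).im, by ring⟩

lemma rep : ∀ (k : ℕ) (x z : ℤ), x^2 + 2*z^2 = 3^k → IsCoprime x z →
    (x = (th^k).re ∨ x = -(th^k).re) ∧ (z = (th^k).im ∨ z = -(th^k).im) := by
  intro k
  induction k with
  | zero =>
    intro x z h hco
    have hz : z = 0 := by nlinarith [sq_nonneg x, sq_nonneg z]
    have hx : (x-1)*(x+1) = 0 := by nlinarith
    rcases mul_eq_zero.1 hx with h1 | h1 <;>
      simp [show (th^0 : Z2) = 1 from by decide] <;> omega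
  | succ k ih =>
    intro x z h hco
    rw [pow_succ 3 k] at h
    have h3 : (3:ℤ) ∣ (x - z) * (x + z) := ⟨3^k - z^2, by linear_combination h⟩
    have hd := (Int.prime_three.dvd_mul).1 h3
    -- In both cases produce X Z with the key relations, then finish uniformly.
    rcases hd with hd | hd
    · -- x ≡ z mod 3, ε = 1
      obtain ⟨X, hX⟩ : (3:ℤ) ∣ x + 2*z := by
        obtain ⟨w, hw⟩ := hd; exact ⟨w + z, by linarith⟩
      obtain ⟨Z, hZ⟩ : (3:ℤ) ∣ z - x := by
        obtain ⟨w, hw⟩ := hd; exact ⟨-w, by linarith⟩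
      have hXZ : X^2 + 2*Z^2 = 3^k := by
        have h9 : 9*(X^2 + 2*Z^2) = 9*3^k := by
          linear_combination (-(x+2*z+3*X))*hX + (-2*(z-x+3*Z))*hZ + 3*h
        linarith
      have hx2 : x = X - 2*Z := by omega
      have hz2 : z = X + Z := by omega
      have hcoXZ : IsCoprime X Z := by
        obtain ⟨u, v, huv⟩ := hco
        exact ⟨u + v, -2*u + v, by rw [hx2, hz2] at huv; linear_combination huv⟩
      obtain ⟨hX1, hZ1⟩ := ih X Z hXZ hcoXZ
      rw [th_re_succ, th_im_succ]
      rcases Nat.eq_zero_or_pos k with hk | hk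
      · subst hk
        simp [show (th^0 : Z2) = 1 from by decide] at hX1 hZ1 ⊢
        omega
      · have h3AB := th_dvd3 k hk
        have hnb := not_both_three hco
        omega
    · -- x ≡ -z mod 3, ε = -1
      obtain ⟨X, hX⟩ : (3:ℤ) ∣ -x + 2*z := by
        obtain ⟨w, hw⟩ := hd; exact ⟨-w + z, by linarith⟩
      obtain ⟨Z, hZ⟩ : (3:ℤ) ∣ -z - x := by
        obtain ⟨w, hw⟩ := hd; exact ⟨-w, by linarith⟩
      have hXZ : X^2 + 2*Z^2 = 3^k := by
        have h9 : 9*(X^2 + 2*Z^2) = 9*3^k := by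
          linear_combination (-(-x+2*z+3*X))*hX + (-2*(-z-x+3*Z))*hZ + 3*h
        linarith
      have hx2 : x = -X - 2*Z := by omega
      have hz2 : z = X - Z := by omega
      have hcoXZ : IsCoprime X Z := by
        obtain ⟨u, v, huv⟩ := hco
        exact ⟨-u + v, -2*u - v, by rw [hx2, hz2] at huv; linear_combination huv⟩
      obtain ⟨hX1, hZ1⟩ := ih X Z hXZ hcoXZ
      rw [th_re_succ, th_im_succ]
      rcases Nat.eq_zero_or_pos k with hk | hk
      · subst hk
        simp [show (th^0 : Z2) = 1 from by decide] at hX1 hZ1 ⊢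
        omega
      · have h3AB := th_dvd3 k hk
        have hnb := not_both_three hco
        omega

lemma sqmod3 (Y : ℕ) : Y^2 % 3 = 0 ∨ Y^2 % 3 = 1 := by
  have h := Nat.pow_mod Y 2 3
  have h2 : Y % 3 < 3 := by omega
  interval_cases h3 : (Y % 3) <;> omega

lemma sqmod4 (Y : ℕ) : Y^2 % 4 = 0 ∨ Y^2 % 4 = 1 := by
  have h := Nat.pow_mod Y 2 4
  have h2 : Y % 4 < 4 := by omega
  interval_cases h3 : (Y % 4) <;> omega

lemma sqmod8 (Y : ℕ) : Y^2 % 8 = 0 ∨ Y^2 % 8 = 1 ∨ Y^2 % 8 = 4 := by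
  have h := Nat.pow_mod Y 2 8
  have h2 : Y % 8 < 8 := by omega
  interval_cases h3 : (Y % 8) <;> omega

lemma pow3mod8 (n : ℕ) : (n % 2 = 0 ∧ 3^n % 8 = 1) ∨ (n % 2 = 1 ∧ 3^n % 8 = 3) := by
  induction n with
  | zero => left; simp
  | succ k ih => rw [pow_succ]; rcases ih with ⟨h1, h2⟩ | ⟨h1, h2⟩ <;> omega

lemma pow3mod4 (n : ℕ) : (n % 2 = 0 ∧ 3^n % 4 = 1) ∨ (n % 2 = 1 ∧ 3^n % 4 = 3) := by
  induction n with
  | zero => left; simp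
  | succ k ih => rw [pow_succ]; rcases ih with ⟨h1, h2⟩ | ⟨h1, h2⟩ <;> omega

lemma pow2mod3 (m : ℕ) : (m % 2 = 0 ∧ 2^m % 3 = 1) ∨ (m % 2 = 1 ∧ 2^m % 3 = 2) := by
  induction m with
  | zero => left; simp
  | succ k ih => rw [pow_succ]; rcases ih with ⟨h1, h2⟩ | ⟨h1, h2⟩ <;> omega

lemma pow3mod2 (n : ℕ) : 3^n % 2 = 1 := by
  induction n with
  | zero => simp
  | succ k ih => rw [pow_succ]; omega

lemma pow2dvd (m c : ℕ) (h : c ≤ m) : 2^c ∣ 2^m := pow_dvd_pow 2 h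
lemma pow3dvd (n c : ℕ) (h : c ≤ n) : 3^c ∣ 3^n := pow_dvd_pow 3 h

lemma pow2mod8 (m : ℕ) (h : 3 ≤ m) : 2^m % 8 = 0 := by
  have := pow2dvd m 3 h; omega
lemma pow2mod4 (m : ℕ) (h : 2 ≤ m) : 2^m % 4 = 0 := by
  have := pow2dvd m 2 h; omega
lemma pow2mod2 (m : ℕ) (h : 1 ≤ m) : 2^m % 2 = 0 := by
  have := pow2dvd m 1 h; omega
lemma pow3mod3 (n : ℕ) (h : 1 ≤ n) : 3^n % 3 = 0 := by
  have := pow3dvd n 1 h; omega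

lemma pow2ge (m : ℕ) : m + 1 ≤ 2^m := Nat.lt_two_pow_self (n := m)
lemma pow2pos (m : ℕ) : 1 ≤ 2^m := Nat.one_le_two_pow
lemma pow3pos (n : ℕ) : 1 ≤ 3^n := Nat.one_le_pow n 3 (by norm_num)
lemma pow3ge (n : ℕ) (h : 1 ≤ n) : 3 ≤ 3^n := by
  calc 3 = 3^1 := by norm_num
  _ ≤ 3^n := Nat.pow_le_pow_right (by norm_num) h
lemma pow3ge9 (n : ℕ) (h : 2 ≤ n) : 9 ≤ 3^n := by
  calc 9 = 3^2 := by norm_num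
  _ ≤ 3^n := Nat.pow_le_pow_right (by norm_num) h
lemma pow2ge2 (m : ℕ) (h : 1 ≤ m) : 2 ≤ 2^m := by
  calc 2 = 2^1 := by norm_num
  _ ≤ 2^m := Nat.pow_le_pow_right (by norm_num) h

lemma pow2inj {m c : ℕ} (h : (2:ℕ)^m = 2^c) : m = c :=
  Nat.pow_right_injective (le_refl 2) h
lemma pow3inj {n c : ℕ} (h : (3:ℕ)^n = 3^c) : n = c :=
  Nat.pow_right_injective (by norm_num) h

/-- P1 : `1 + 3^v = 2^w` with `v ≥ 1` forces `v = 1, w = 2`. -/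
lemma P1 (v w : ℕ) (hv : 1 ≤ v) (h : 1 + 3^v = 2^w) : v = 1 ∧ w = 2 := by
  by_cases hw : 3 ≤ w
  · exfalso
    have h8 := pow2mod8 w hw
    rcases pow3mod8 v with ⟨_, h3⟩ | ⟨_, h3⟩ <;> omega
  · have h2 : 2^w ≤ 2^2 := Nat.pow_le_pow_right (by norm_num) (by omega)
    have h3 := pow3ge v hv
    have hv9 : 3^v < 9 := by norm_num at h2; omega
    have hv2 : v < 2 := by
      by_contra hc
      have := pow3ge9 v (by omega)
      omega
    have hv1 : v = 1 := by omega
    subst hv1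
    refine ⟨rfl, pow2inj (show (2:ℕ)^w = 2^2 from ?_)⟩
    norm_num at h ⊢
    omega

/-- P2 : `3^k = 2^w + 1` forces `(k,w) = (1,1)` or `(2,3)`. -/
lemma P2 (k w : ℕ) (h : 3^k = 2^w + 1) : (k = 1 ∧ w = 1) ∨ (k = 2 ∧ w = 3) := by
  by_cases hw : 3 ≤ w
  · right
    have h8 := pow2mod8 w hw
    have hk2 : k % 2 = 0 := by
      rcases pow3mod8 k with ⟨h1, h2⟩ | ⟨h1, h2⟩ <;> omega
    obtain ⟨j, rfl⟩ : ∃ j, k = 2*j := ⟨k/2, by omega⟩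
    have hQ : (3^j)^2 = 2^w + 1 := by rw [← pow_mul, Nat.mul_comm]; exact h
    have hj1 : 1 ≤ j := by
      by_contra hj0
      have hj00 : j = 0 := by omega
      subst hj00
      have h2w := pow2ge2 w (by omega)
      rw [pow_zero, one_pow] at hQ
      omega
    have hQ3 : 3 ≤ 3^j := pow3ge j hj1
    have hfac : (3^j - 1) * (3^j + 1) = 2^w := by
      have hsq : (3^j)^2 = (3^j - 1)*(3^j + 1) + 1 := by
        obtain ⟨q, hq⟩ : ∃ q, 3^j = q+1 := ⟨3^j-1, by omega⟩
        rw [hq]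
        have hr : (q+1)^2 = q*(q+2)+1 := by ring
        simpa using hr
      omega
    have hd1 : (3^j + 1) ∣ 2^w := ⟨3^j - 1, by rw [← hfac]; ring⟩
    have hd2 : (3^j - 1) ∣ 2^w := ⟨3^j + 1, by rw [← hfac]⟩
    obtain ⟨i, hile, hi⟩ := (Nat.dvd_prime_pow Nat.prime_two).1 hd1
    obtain ⟨i', hile', hi'⟩ := (Nat.dvd_prime_pow Nat.prime_two).1 hd2
    have h4 : 4 ≤ 2^i := by omega
    have h2 : 2 ≤ 2^i' := by omega
    have hi2' : i' = 1 := by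
      by_contra hc
      have h1 : 2 ≤ i' := by
        rcases Nat.eq_zero_or_pos i' with rfl | h1
        · norm_num at hi'; omega
        · omega
      have h2i : 2 ≤ i := by
        by_contra hc2
        have : 2^i ≤ 2^1 := Nat.pow_le_pow_right (by norm_num) (by omega)
        omega
      have d1 := pow2mod4 i h2i
      have d2 := pow2mod4 i' h1
      omega
    subst hi2'
    have hj3 : 3^j = 3 := by norm_num at hi'; omega
    have hj : j = 1 := pow3inj (show (3:ℕ)^j = 3^1 by rw [hj3]; norm_num)
    subst hj
    refine ⟨by omega, pow2inj (show (2:ℕ)^w = 2^3 from ?_)⟩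
    have h9 : (3:ℕ)^(2*1) = 9 := by norm_num
    have h83 : (2:ℕ)^3 = 8 := by norm_num
    omega
  · left
    have h2 : 2^w ≤ 2^2 := Nat.pow_le_pow_right (by norm_num) (by omega)
    have hk1 : 1 ≤ k := by
      by_contra hc
      have hk0 : k = 0 := by omega
      subst hk0
      have := pow2pos w
      rw [pow_zero] at h
      omega
    have h3 := pow3ge k hk1
    have h9 : 3^k < 9 := by norm_num at h2; omega
    have hk2 : k < 2 := by
      by_contra hc
      have := pow3ge9 k (by omega)
      omega
    have hk : k = 1 := by omega
    subst hk
    refine ⟨rfl, pow2inj (show (2:ℕ)^w = 2^1 from ?_)⟩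
    have h31 : (3:ℕ)^1 = 3 := by norm_num
    have h21 : (2:ℕ)^1 = 2 := by norm_num
    omega

lemma E1 (y : ℤ) (n : ℕ) (hy : y ≠ 0) (h : 2*y^2 + 1 = 3^n) :
    (n = 1 ∧ y^2 = 1) ∨ (n = 2 ∧ y^2 = 4) ∨ (n = 5 ∧ y^2 = 121) := by
  have h' : (1:ℤ)^2 + 2*y^2 = 3^n := by linarith
  obtain ⟨hx, hz⟩ := rep n 1 y h' isCoprime_one_left
  have ha : (th^n).re = 1 ∨ (th^n).re = -1 := by rcases hx with h1 | h1 <;> omega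
  rcases main_a n ha with rfl | rfl | rfl | rfl
  · exfalso
    rw [show (th^(0:ℕ)).im = 0 from by decide] at hz
    omega
  · left
    rw [show (th^(1:ℕ)).im = 1 from by decide] at hz
    refine ⟨rfl, ?_⟩
    rcases hz with rfl | rfl <;> norm_num
  · right; left
    rw [show (th^(2:ℕ)).im = 2 from by decide] at hz
    refine ⟨rfl, ?_⟩
    rcases hz with rfl | rfl <;> norm_num
  · right; right
    rw [show (th^(5:ℕ)).im = -11 from by decide] at hz
    refine ⟨rfl, ?_⟩
    rcases hz with rfl | rfl <;> norm_num

lemma E2 (y : ℤ) (n : ℕ) (h : y^2 + 2 = 3^n) :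
    (n = 1 ∧ y^2 = 1) ∨ (n = 3 ∧ y^2 = 25) := by
  have h' : y^2 + 2*(1:ℤ)^2 = 3^n := by linarith
  obtain ⟨hx, hz⟩ := rep n y 1 h' isCoprime_one_right
  have hb : (th^n).im = 1 ∨ (th^n).im = -1 := by rcases hz with h1 | h1 <;> omega
  rcases main_b n hb with rfl | rfl
  · left
    rw [show (th^(1:ℕ)).re = 1 from by decide] at hx
    refine ⟨rfl, ?_⟩
    rcases hx with rfl | rfl <;> norm_num
  · right
    rw [show (th^(3:ℕ)).re = -5 from by decide] at hx
    refine ⟨rfl, ?_⟩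
    rcases hx with rfl | rfl <;> norm_num

lemma E1N (Y n : ℕ) (hY : Y ≠ 0) (h : 2*Y^2 + 1 = 3^n) :
    (n = 1 ∧ Y^2 = 1) ∨ (n = 2 ∧ Y^2 = 4) ∨ (n = 5 ∧ Y^2 = 121) := by
  have hz : (2:ℤ)*(Y:ℤ)^2 + 1 = 3^n := by exact_mod_cast h
  have hy0 : (Y:ℤ) ≠ 0 := Int.natCast_ne_zero.2 hY
  rcases E1 _ n hy0 hz with ⟨h1, h2⟩ | ⟨h1, h2⟩ | ⟨h1, h2⟩
  · exact Or.inl ⟨h1, by exact_mod_cast h2⟩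
  · exact Or.inr (Or.inl ⟨h1, by exact_mod_cast h2⟩)
  · exact Or.inr (Or.inr ⟨h1, by exact_mod_cast h2⟩)

lemma E2N (Y n : ℕ) (h : Y^2 + 2 = 3^n) : (n = 1 ∧ Y^2 = 1) ∨ (n = 3 ∧ Y^2 = 25) := by
  have hz : (Y:ℤ)^2 + 2 = 3^n := by exact_mod_cast h
  rcases E2 _ n hz with ⟨h1, h2⟩ | ⟨h1, h2⟩
  · exact Or.inl ⟨h1, by exact_mod_cast h2⟩
  · exact Or.inr ⟨h1, by exact_mod_cast h2⟩

lemma nat23 : ∀ N : ℕ, 0 < N → (∀ p : ℕ, p.Prime → p ∣ N → p = 2 ∨ p = 3) →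
    ∃ i j : ℕ, N = 2^i*3^j := by
  intro N
  induction N using Nat.strong_induction_on with
  | _ N ih =>
    intro hN hdvd
    by_cases h1 : N = 1
    · exact ⟨0, 0, by simp [h1]⟩
    · have hp := Nat.minFac_prime h1
      obtain ⟨M, hM⟩ := Nat.minFac_dvd N
      have hploc : 2 ≤ N.minFac := hp.two_le
      have hM0 : 0 < M := by
        rcases Nat.eq_zero_or_pos M with rfl | h2
        · omega
        · exact h2
      have hMlt : M < N := by nlinarith
      have hMd : ∀ p, p.Prime → p ∣ M → p = 2 ∨ p = 3 :=
        fun p hp2 hd => hdvd p hp2 (hd.trans (Dvd.intro_left _ hM.symm))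
      obtain ⟨i, j, hij⟩ := ih M hMlt hM0 hMd
      rcases hdvd N.minFac hp ⟨M, hM⟩ with h23 | h23
      · exact ⟨i+1, j, by rw [hM, hij, h23, pow_succ]; ring⟩
      · exact ⟨i, j+1, by rw [hM, hij, h23, pow_succ]; ring⟩

lemma ttu_fact (z : ℤ) (hz : 0 < z)
    (h2 : ∀ p : ℕ, p.Prime → (p:ℤ) ∣ z → p = 2 ∨ p = 3) :
    ∃ i j : ℕ, z = 2^i*3^j := by
  obtain ⟨N, rfl⟩ : ∃ N : ℕ, z = (N:ℤ) := ⟨z.toNat, (Int.toNat_of_nonneg hz.le).symm⟩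
  have hN : 0 < N := by exact_mod_cast hz
  have hNd : ∀ p : ℕ, p.Prime → p ∣ N → p = 2 ∨ p = 3 :=
    fun p hp hd => h2 p hp (Int.natCast_dvd_natCast.2 hd)
  obtain ⟨i, j, hij⟩ := nat23 N hN hNd
  exact ⟨i, j, by rw [hij]; push_cast; ring⟩

lemma famA (d Y m n : ℕ) (hd : d = 1 ∨ d = 2 ∨ d = 3 ∨ d = 6) (hY : Y ≠ 0)
    (h : d*Y^2 + 1 = 2^m*3^n) :
    (d=1 ∧ Y^2=1 ∧ m=1 ∧ n=0) ∨ (d=3 ∧ Y^2=1 ∧ m=2 ∧ n=0) ∨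
    (d=2 ∧ Y^2=1 ∧ m=0 ∧ n=1) ∨ (d=2 ∧ Y^2=4 ∧ m=0 ∧ n=2) ∨
    (d=2 ∧ Y^2=121 ∧ m=0 ∧ n=5) := by
  have hY2 : 1 ≤ Y^2 := Nat.one_le_pow 2 Y (Nat.pos_of_ne_zero hY)
  rcases hd with rfl | rfl | rfl | rfl
  · -- d = 1
    by_cases hn : n = 0
    · subst hn; rw [pow_zero, mul_one] at h
      by_cases hm1 : m ≤ 1
      · interval_cases m
        · exfalso; rw [pow_zero] at h; omega
        · left; rw [pow_one] at h; exact ⟨rfl, by omega, rfl, rfl⟩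
      · exfalso
        have h4 := pow2mod4 m (by omega)
        rcases sqmod4 Y with hs | hs <;> omega
    · exfalso
      have h3 : (2^m*3^n) % 3 = 0 := by
        have : (3:ℕ) ∣ 2^m*3^n :=
          dvd_mul_of_dvd_right (dvd_pow_self 3 hn) _
        omega
      rcases sqmod3 Y with hs | hs <;> omega
  · -- d = 2
    by_cases hm : m = 0
    · subst hm; rw [pow_zero, one_mul] at h
      rcases E1N Y n hY h with ⟨h1, h2⟩ | ⟨h1, h2⟩ | ⟨h1, h2⟩
      · exact Or.inr (Or.inr (Or.inl ⟨rfl, h2, rfl, h1⟩))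
      · exact Or.inr (Or.inr (Or.inr (Or.inl ⟨rfl, h2, rfl, h1⟩)))
      · exact Or.inr (Or.inr (Or.inr (Or.inr ⟨rfl, h2, rfl, h1⟩)))
    · exfalso
      have h2 : (2^m*3^n) % 2 = 0 := by
        have : (2:ℕ) ∣ 2^m*3^n := dvd_mul_of_dvd_left (dvd_pow_self 2 hm) _
        omega
      omega
  · -- d = 3
    by_cases hn : n = 0
    · subst hn; rw [pow_zero, mul_one] at h
      by_cases hm2 : m ≤ 2
      · interval_cases m
        · exfalso; rw [pow_zero] at h; omega
        · exfalso; rw [pow_one] at h; omega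
        · have h4 : (2:ℕ)^2 = 4 := by norm_num
          exact Or.inr (Or.inl ⟨rfl, by omega, rfl, rfl⟩)
      · exfalso
        have h8 := pow2mod8 m (by omega)
        rcases sqmod8 Y with hs | hs | hs <;> omega
    · exfalso
      have h3 : (2^m*3^n) % 3 = 0 := by
        have : (3:ℕ) ∣ 2^m*3^n := dvd_mul_of_dvd_right (dvd_pow_self 3 hn) _
        omega
      omega
  · -- d = 6
    exfalso
    by_cases hm : m = 0
    · subst hm; rw [pow_zero, one_mul] at h
      by_cases hn : n = 0
      · subst hn; rw [pow_zero] at h; omega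
      · have h3 := pow3mod3 n (by omega)
        omega
    · have h2 : (2^m*3^n) % 2 = 0 := by
        have : (2:ℕ) ∣ 2^m*3^n := dvd_mul_of_dvd_left (dvd_pow_self 2 hm) _
        omega
      omega

lemma famB (d Y v m : ℕ) (hd : d = 1 ∨ d = 2 ∨ d = 3 ∨ d = 6) (hY : Y ≠ 0)
    (hv : 1 ≤ v) (h : d*Y^2 + 3^v = 2^m) :
    d = 1 ∧ Y^2 = 1 ∧ v = 1 ∧ m = 2 := by
  have hY2 : 1 ≤ Y^2 := Nat.one_le_pow 2 Y (Nat.pos_of_ne_zero hY)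
  have h3v := pow3ge v hv
  have h3v2 := pow3mod2 v
  rcases hd with rfl | rfl | rfl | rfl
  · -- d = 1
    have hm2 : m % 2 = 0 := by
      rcases pow2mod3 m with ⟨h1, h2⟩ | ⟨h1, h2⟩
      · exact h1
      · exfalso
        have h33 := pow3mod3 v hv
        rcases sqmod3 Y with hs | hs <;> omega
    obtain ⟨k, rfl⟩ : ∃ k, m = k*2 := ⟨m/2, by omega⟩
    rw [pow_mul] at h
    have hk1 : 1 ≤ k := by
      by_contra hc
      have hk0 : k = 0 := by omega
      subst hk0
      rw [pow_zero, one_pow] at h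
      omega
    have hYQ : Y < 2^k := by
      by_contra hc
      have : (2^k)^2 ≤ Y^2 := Nat.pow_le_pow_left (by omega) 2
      omega
    have hfac : (2^k - Y)*(2^k + Y) = 3^v := by
      obtain ⟨e, he⟩ : ∃ e, 2^k = Y + e := ⟨2^k - Y, by omega⟩
      rw [he] at h ⊢
      have h3 : Y + e - Y = e := by omega
      rw [h3]
      have key : e*(Y + e + Y) = 2*(Y*e) + e^2 := by ring
      rw [key]
      have hexp : (Y+e)^2 = Y^2 + 2*(Y*e) + e^2 := by ring
      omega
    have hd1 : (2^k + Y) ∣ 3^v := ⟨2^k - Y, by rw [← hfac]; ring⟩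
    have hd2 : (2^k - Y) ∣ 3^v := ⟨2^k + Y, by rw [← hfac]⟩
    obtain ⟨j, hjle, hj⟩ := (Nat.dvd_prime_pow Nat.prime_three).1 hd1
    obtain ⟨i, hile, hi⟩ := (Nat.dvd_prime_pow Nat.prime_three).1 hd2
    have hij : (3:ℕ)^(i+j) = 3^v := by rw [pow_add, ← hi, ← hj]; exact hfac
    have hijv : i + j = v := pow3inj hij
    have hp2k := pow2pos k
    have hj1 : 1 ≤ j := by
      by_contra hc
      have hj0 : j = 0 := by omega
      subst hj0
      rw [pow_zero] at hj
      omega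
    have hi0 : i = 0 := by
      by_contra hc
      have h3i := pow3mod3 i (by omega)
      have h3j := pow3mod3 j hj1
      have hsum : 3^i + 3^j = 2*2^k := by omega
      rcases pow2mod3 (k+1) with ⟨h1, h2⟩ | ⟨h1, h2⟩ <;>
        · rw [pow_succ] at h2; omega
    rw [hi0, pow_zero] at hi
    have hjv : j = v := by omega
    rw [hjv] at hj
    have hsum : 1 + 3^v = 2^(k+1) := by rw [pow_succ]; omega
    obtain ⟨hv1, hk2⟩ := P1 v (k+1) hv hsum
    have hk : k = 1 := by omega
    subst hk
    have h21 : (2:ℕ)^1 = 2 := by norm_num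
    have hY1 : Y = 1 := by omega
    have hYsq : Y^2 = 1 := by rw [hY1]; norm_num
    exact ⟨rfl, hYsq, hv1, by omega⟩
  · exfalso
    by_cases hm : m = 0
    · rw [hm, pow_zero] at h; omega
    · have h2 := pow2mod2 m (by omega)
      omega
  · exfalso
    have h33 := pow3mod3 v hv
    rcases pow2mod3 m with ⟨h1, h2⟩ | ⟨h1, h2⟩ <;> omega
  · exfalso
    by_cases hm : m = 0
    · rw [hm, pow_zero] at h; omega
    · have h2 := pow2mod2 m (by omega)
      omega

lemma famC (d Y u n : ℕ) (hd : d = 1 ∨ d = 2 ∨ d = 3 ∨ d = 6) (hY : Y ≠ 0)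
    (hu : 1 ≤ u) (h : d*Y^2 + 2^u = 3^n) :
    (d=1 ∧ Y^2=1 ∧ u=1 ∧ n=1) ∨ (d=1 ∧ Y^2=25 ∧ u=1 ∧ n=3) ∨
    (d=1 ∧ Y^2=1 ∧ u=3 ∧ n=2) ∨ (d=1 ∧ Y^2=49 ∧ u=5 ∧ n=4) := by
  have hY2 : 1 ≤ Y^2 := Nat.one_le_pow 2 Y (Nat.pos_of_ne_zero hY)
  have h2u := pow2ge2 u hu
  have h2u2 := pow2mod2 u hu
  have h3n2 := pow3mod2 n
  rcases hd with rfl | rfl | rfl | rfl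
  · -- d = 1
    have hn1 : 1 ≤ n := by
      by_contra hc
      have hn0 : n = 0 := by omega
      rw [hn0, pow_zero] at h
      omega
    by_cases hu1 : u = 1
    · subst hu1
      have h21 : (2:ℕ)^1 = 2 := by norm_num
      have hE := E2N Y n (by omega)
      rcases hE with ⟨h1, h2⟩ | ⟨h1, h2⟩
      · exact Or.inl ⟨rfl, h2, rfl, h1⟩
      · exact Or.inr (Or.inl ⟨rfl, h2, rfl, h1⟩)
    · have hu2 : 2 ≤ u := by omega
      have h4 := pow2mod4 u hu2
      have hn2 : n % 2 = 0 := by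
        rcases pow3mod4 n with ⟨h1, h2⟩ | ⟨h1, h2⟩
        · exact h1
        · exfalso; rcases sqmod4 Y with hs | hs <;> omega
      obtain ⟨k, rfl⟩ : ∃ k, n = k*2 := ⟨n/2, by omega⟩
      rw [pow_mul] at h
      have hk1 : 1 ≤ k := by omega
      have h3k := pow3ge k hk1
      have h3k2 := pow3mod2 k
      have hYQ : Y < 3^k := by
        by_contra hc
        have : (3^k)^2 ≤ Y^2 := Nat.pow_le_pow_left (by omega) 2
        omega
      have hfac : (3^k - Y)*(3^k + Y) = 2^u := by
        obtain ⟨e, he⟩ : ∃ e, 3^k = Y + e := ⟨3^k - Y, by omega⟩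
        rw [he] at h ⊢
        have h3 : Y + e - Y = e := by omega
        rw [h3]
        have key : e*(Y + e + Y) = 2*(Y*e) + e^2 := by ring
        rw [key]
        have hexp : (Y+e)^2 = Y^2 + 2*(Y*e) + e^2 := by ring
        omega
      have hd1 : (3^k + Y) ∣ 2^u := ⟨3^k - Y, by rw [← hfac]; ring⟩
      have hd2 : (3^k - Y) ∣ 2^u := ⟨3^k + Y, by rw [← hfac]⟩
      obtain ⟨t, htle, ht⟩ := (Nat.dvd_prime_pow Nat.prime_two).1 hd1
      obtain ⟨s, hsle, hs⟩ := (Nat.dvd_prime_pow Nat.prime_two).1 hd2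
      have hst : (2:ℕ)^(s+t) = 2^u := by rw [pow_add, ← hs, ← ht]; exact hfac
      have hstu : s + t = u := pow2inj hst
      have ht2 : 2 ≤ t := by
        by_contra hc
        have htle1 : t ≤ 1 := by omega
        have : 2^t ≤ 2^1 := Nat.pow_le_pow_right (by norm_num) htle1
        have h21 : (2:ℕ)^1 = 2 := by norm_num
        omega
      have hs1 : 1 ≤ s := by
        by_contra hc
        have hs0 : s = 0 := by omega
        rw [hs0, pow_zero] at hs
        have h2t := pow2mod2 t (by omega)
        omega
      have hs2 : s = 1 := by
        by_contra hc
        have hs4 := pow2mod4 s (by omega)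
        have ht4 := pow2mod4 t ht2
        omega
      rw [hs2] at hs
      have h21 : (2:ℕ)^1 = 2 := by norm_num
      obtain ⟨w, rfl⟩ : ∃ w, t = w + 1 := ⟨t-1, by omega⟩
      have hkey : 3^k = 2^w + 1 := by
        have hps : (2:ℕ)^(w+1) = 2^w*2 := pow_succ 2 w
        omega
      rcases P2 k w hkey with ⟨hk, hw1⟩ | ⟨hk, hw1⟩
      · -- k = 1, w = 1 : u = 3, n = 2, Y = 1
        subst hk hw1
        have h31 : (3:ℕ)^1 = 3 := by norm_num
        have h22 : (2:ℕ)^(1+1) = 4 := by norm_num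
        have hYv : Y = 1 := by omega
        have hYsq : Y^2 = 1 := by rw [hYv]; norm_num
        exact Or.inr (Or.inr (Or.inl ⟨rfl, hYsq, by omega, by omega⟩))
      · -- k = 2, w = 3 : u = 5, n = 4, Y = 7
        subst hk hw1
        have h32 : (3:ℕ)^2 = 9 := by norm_num
        have h24 : (2:ℕ)^(3+1) = 16 := by norm_num
        have hYv : Y = 7 := by omega
        have hYsq : Y^2 = 49 := by rw [hYv]; norm_num
        exact Or.inr (Or.inr (Or.inr ⟨rfl, hYsq, by omega, by omega⟩))
  · exfalso
    by_cases hn : n = 0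
    · rw [hn, pow_zero] at h; omega
    · omega
  · exfalso
    by_cases hn : n = 0
    · rw [hn, pow_zero] at h; omega
    · have h3 := pow3mod3 n (by omega)
      rcases pow2mod3 u with ⟨h1, h2⟩ | ⟨h1, h2⟩ <;> omega
  · exfalso
    by_cases hn : n = 0
    · rw [hn, pow_zero] at h; omega
    · omega

end TTU23

open TTU23 in
theorem two_three_unit_square_equations
    (a b c : ℤ) (habc : a = b + c) (ha : a ≠ 0) (hc : c < 0)
    (hb23 : TwoThreeUnit b) (hc23 : TwoThreeUnit c) (hgcd : Int.gcd b c = 1)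
    (hsq : (∃ x : ℤ, a = x ^ 2) ∨ (∃ x : ℤ, 2 * a = x ^ 2) ∨
      (∃ x : ℤ, 3 * a = x ^ 2) ∨ (∃ x : ℤ, 6 * a = x ^ 2)) :
    (a, b, c) ∈ ([(1, 2, -1), (1, 4, -3), (1, 3, -2), (1, 9, -8), (25, 27, -2),
      (49, 81, -32), (2, 3, -1), (8, 9, -1), (242, 243, -1), (3, 4, -1)] :
        List (ℤ × ℤ × ℤ)) := by
  obtain ⟨hb0, hbp⟩ := hb23
  obtain ⟨hc0, hcp⟩ := hc23
  -- Step 1: a = d * y^2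
  have key : ∃ (d : ℕ) (y : ℤ), (d = 1 ∨ d = 2 ∨ d = 3 ∨ d = 6) ∧ y ≠ 0 ∧ a = (d:ℤ)*y^2 := by
    rcases hsq with ⟨x, hx⟩ | ⟨x, hx⟩ | ⟨x, hx⟩ | ⟨x, hx⟩
    · refine ⟨1, x, by tauto, ?_, by rw [hx]; push_cast; ring⟩
      intro h0; exact ha (by rw [hx, h0]; ring)
    · have h2x : (2:ℤ) ∣ x := by
        have hdd : (2:ℤ) ∣ x*x := ⟨a, by linear_combination -hx⟩
        rcases (Int.prime_two.dvd_mul).1 hdd with h | h <;> exact h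
      obtain ⟨y, rfl⟩ := h2x
      refine ⟨2, y, by tauto, ?_, ?_⟩
      · intro h0
        apply ha
        have : (2:ℤ)*a = 0 := by rw [hx, h0]; ring
        omega
      · have h4 : (2:ℤ)*a = 4*y^2 := by linear_combination hx
        push_cast
        linarith
    · have h3x : (3:ℤ) ∣ x := by
        have hdd : (3:ℤ) ∣ x*x := ⟨a, by linear_combination -hx⟩
        rcases (Int.prime_three.dvd_mul).1 hdd with h | h <;> exact h
      obtain ⟨y, rfl⟩ := h3x
      refine ⟨3, y, by tauto, ?_, ?_⟩
      · intro h0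
        apply ha
        have : (3:ℤ)*a = 0 := by rw [hx, h0]; ring
        omega
      · have h9 : (3:ℤ)*a = 9*y^2 := by linear_combination hx
        push_cast
        linarith
    · have h2x : (2:ℤ) ∣ x := by
        have hdd : (2:ℤ) ∣ x*x := ⟨3*a, by linear_combination -hx⟩
        rcases (Int.prime_two.dvd_mul).1 hdd with h | h <;> exact h
      obtain ⟨x1, rfl⟩ := h2x
      have h3x : (3:ℤ) ∣ x1 := by
        have hx' : (6:ℤ)*a = 4*(x1*x1) := by linear_combination hx
        have heq2 : 2*(x1*x1) = 3*a := by omega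
        have hdd : (3:ℤ) ∣ 2*(x1*x1) := ⟨a, heq2⟩
        rcases (Int.prime_three.dvd_mul).1 hdd with h | h
        · exfalso; norm_num at h
        · rcases (Int.prime_three.dvd_mul).1 h with h2 | h2 <;> exact h2
      obtain ⟨y, rfl⟩ := h3x
      refine ⟨6, y, by tauto, ?_, ?_⟩
      · intro h0
        apply ha
        have : (6:ℤ)*a = 0 := by rw [hx, h0]; ring
        omega
      · have h36 : (6:ℤ)*a = 36*y^2 := by linear_combination hx
        push_cast
        linarith
  obtain ⟨d, y, hd, hy0, hay⟩ := key
  have hd1 : 1 ≤ (d:ℤ) := by rcases hd with rfl | rfl | rfl | rfl <;> norm_num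
  have hysq : 1 ≤ y^2 := by
    have h1 : 0 ≤ y^2 := sq_nonneg y
    have h2 : y^2 ≠ 0 := pow_ne_zero 2 hy0
    omega
  have ha1 : 0 < a := by nlinarith
  have hbpos : 0 < b := by omega
  obtain ⟨m, n, hb⟩ := ttu_fact b hbpos hbp
  have hcpos : 0 < -c := by omega
  obtain ⟨u, v, hcuv⟩ := ttu_fact (-c) hcpos (fun p hp hdvd => hcp p hp (dvd_neg.1 hdvd))
  have hmu : m = 0 ∨ u = 0 := by
    by_contra hcon
    push_neg at hcon
    obtain ⟨hm, hu⟩ := hcon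
    have h2b : (2:ℤ) ∣ b := by
      rw [hb]; exact dvd_mul_of_dvd_left (dvd_pow_self 2 hm) _
    have h2c : (2:ℤ) ∣ c := by
      have hh : (2:ℤ) ∣ -c := by
        rw [hcuv]; exact dvd_mul_of_dvd_left (dvd_pow_self 2 hu) _
      omega
    have hgg := Int.dvd_gcd h2b h2c
    rw [hgcd] at hgg
    norm_num at hgg
  have hnv : n = 0 ∨ v = 0 := by
    by_contra hcon
    push_neg at hcon
    obtain ⟨hn, hv⟩ := hcon
    have h3b : (3:ℤ) ∣ b := by
      rw [hb]; exact dvd_mul_of_dvd_right (dvd_pow_self 3 hn) _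
    have h3c : (3:ℤ) ∣ c := by
      have hh : (3:ℤ) ∣ -c := by
        rw [hcuv]; exact dvd_mul_of_dvd_right (dvd_pow_self 3 hv) _
      omega
    have hgg := Int.dvd_gcd h3b h3c
    rw [hgcd] at hgg
    norm_num at hgg
  have heq : (d:ℤ)*y^2 + 2^u*3^v = 2^m*3^n := by
    rw [← hay, ← hb, ← hcuv]; omega
  have hY0 : y.natAbs ≠ 0 := Int.natAbs_ne_zero.2 hy0
  have heqN : d*y.natAbs^2 + 2^u*3^v = 2^m*3^n := by
    have hcast : ((d*y.natAbs^2 + 2^u*3^v : ℕ):ℤ) = ((2^m*3^n : ℕ):ℤ) := by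
      push_cast
      rw [sq_abs]
      exact heq
    exact_mod_cast hcast
  have haN : a = ((d * y.natAbs^2 : ℕ) : ℤ) := by
    rw [hay]; push_cast; rw [sq_abs]
  clear heq hay hysq hd1 ha ha1 hbpos hcpos habc hgcd hbp hcp hb0 hc0 hy0 hsq
  rcases hmu with hm0 | hu0
  · rcases hnv with hn0 | hv0
    · -- m = 0, n = 0 : b = 1, impossible
      exfalso
      subst hm0 hn0
      simp only [pow_zero, one_mul, mul_one] at heqN
      have hp1 := pow2pos u
      have hp2 := pow3pos v
      have hdY : 0 < d*y.natAbs^2 :=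
        Nat.mul_pos (by rcases hd with rfl | rfl | rfl | rfl <;> norm_num)
          (Nat.pos_of_ne_zero (by simpa using hY0))
      have hp3 : 0 < 2^u*3^v := Nat.mul_pos hp1 hp2
      omega
    · -- m = 0, v = 0 : d*Y² + 2^u = 3^n
      subst hm0 hv0
      simp only [pow_zero, one_mul, mul_one] at heqN
      by_cases hu0' : u = 0
      · subst hu0'
        rw [pow_zero] at heqN
        have hA := famA d y.natAbs 0 n hd hY0 (by rw [pow_zero, one_mul]; omega)
        rcases hA with ⟨_, _, hmm, _⟩ | ⟨_, _, hmm, _⟩ |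
            ⟨hd2, hS, _, hn1⟩ | ⟨hd2, hS, _, hn1⟩ | ⟨hd2, hS, _, hn1⟩
        · omega
        · omega
        · subst hd2 hn1
          have haV : a = 2 := by rw [haN, hS]; norm_num
          have hbV : b = 3 := by rw [hb]; norm_num
          have hcV : c = -1 := by
            have : -c = 1 := by rw [hcuv]; norm_num
            omega
          rw [haV, hbV, hcV]; decide
        · subst hd2 hn1
          have haV : a = 8 := by rw [haN, hS]; norm_num
          have hbV : b = 9 := by rw [hb]; norm_num
          have hcV : c = -1 := by
            have : -c = 1 := by rw [hcuv]; norm_num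
            omega
          rw [haV, hbV, hcV]; decide
        · subst hd2 hn1
          have haV : a = 242 := by rw [haN, hS]; norm_num
          have hbV : b = 243 := by rw [hb]; norm_num
          have hcV : c = -1 := by
            have : -c = 1 := by rw [hcuv]; norm_num
            omega
          rw [haV, hbV, hcV]; decide
      · have hC := famC d y.natAbs u n hd hY0 (by omega) heqN
        rcases hC with ⟨hd2, hS, hu1, hn1⟩ | ⟨hd2, hS, hu1, hn1⟩ |
            ⟨hd2, hS, hu1, hn1⟩ | ⟨hd2, hS, hu1, hn1⟩
        · subst hd2 hu1 hn1
          have haV : a = 1 := by rw [haN, hS]; norm_num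
          have hbV : b = 3 := by rw [hb]; norm_num
          have hcV : c = -2 := by
            have : -c = 2 := by rw [hcuv]; norm_num
            omega
          rw [haV, hbV, hcV]; decide
        · subst hd2 hu1 hn1
          have haV : a = 25 := by rw [haN, hS]; norm_num
          have hbV : b = 27 := by rw [hb]; norm_num
          have hcV : c = -2 := by
            have : -c = 2 := by rw [hcuv]; norm_num
            omega
          rw [haV, hbV, hcV]; decide
        · subst hd2 hu1 hn1
          have haV : a = 1 := by rw [haN, hS]; norm_num
          have hbV : b = 9 := by rw [hb]; norm_num
          have hcV : c = -8 := by
            have : -c = 8 := by rw [hcuv]; norm_num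
            omega
          rw [haV, hbV, hcV]; decide
        · subst hd2 hu1 hn1
          have haV : a = 49 := by rw [haN, hS]; norm_num
          have hbV : b = 81 := by rw [hb]; norm_num
          have hcV : c = -32 := by
            have : -c = 32 := by rw [hcuv]; norm_num
            omega
          rw [haV, hbV, hcV]; decide
  · rcases hnv with hn0 | hv0
    · -- u = 0, n = 0 : d*Y² + 3^v = 2^m
      subst hu0 hn0
      simp only [pow_zero, one_mul, mul_one] at heqN
      by_cases hv0' : v = 0
      · subst hv0'
        rw [pow_zero] at heqN
        have hA := famA d y.natAbs m 0 hd hY0 (by rw [pow_zero, mul_one]; omega)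
        rcases hA with ⟨hd2, hS, hm1, _⟩ | ⟨hd2, hS, hm1, _⟩ |
            ⟨_, _, _, hnn⟩ | ⟨_, _, _, hnn⟩ | ⟨_, _, _, hnn⟩
        · subst hd2 hm1
          have haV : a = 1 := by rw [haN, hS]; norm_num
          have hbV : b = 2 := by rw [hb]; norm_num
          have hcV : c = -1 := by
            have : -c = 1 := by rw [hcuv]; norm_num
            omega
          rw [haV, hbV, hcV]; decide
        · subst hd2 hm1
          have haV : a = 3 := by rw [haN, hS]; norm_num
          have hbV : b = 4 := by rw [hb]; norm_num
          have hcV : c = -1 := by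
            have : -c = 1 := by rw [hcuv]; norm_num
            omega
          rw [haV, hbV, hcV]; decide
        · omega
        · omega
        · omega
      · obtain ⟨hd2, hS, hv1, hm1⟩ := famB d y.natAbs v m hd hY0 (by omega) heqN
        subst hd2 hv1 hm1
        have haV : a = 1 := by rw [haN, hS]; norm_num
        have hbV : b = 4 := by rw [hb]; norm_num
        have hcV : c = -3 := by
          have : -c = 3 := by rw [hcuv]; norm_num
          omega
        rw [haV, hbV, hcV]; decide
    · -- u = 0, v = 0 : d*Y² + 1 = 2^m*3^n
      subst hu0 hv0
      have heqN' : d*y.natAbs^2 + 1 = 2^m*3^n := by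
        simp only [pow_zero, one_mul, mul_one] at heqN
        omega
      have hA := famA d y.natAbs m n hd hY0 heqN'
      have hcV : c = -1 := by
        have : -c = 1 := by rw [hcuv]; norm_num
        omega
      rcases hA with ⟨hd2, hS, hm1, hn1⟩ | ⟨hd2, hS, hm1, hn1⟩ |
          ⟨hd2, hS, hm1, hn1⟩ | ⟨hd2, hS, hm1, hn1⟩ | ⟨hd2, hS, hm1, hn1⟩ <;>
        subst hd2 hm1 hn1
      · have haV : a = 1 := by rw [haN, hS]; norm_num
        have hbV : b = 2 := by rw [hb]; norm_num
        rw [haV, hbV, hcV]; decide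
      · have haV : a = 3 := by rw [haN, hS]; norm_num
        have hbV : b = 4 := by rw [hb]; norm_num
        rw [haV, hbV, hcV]; decide
      · have haV : a = 2 := by rw [haN, hS]; norm_num
        have hbV : b = 3 := by rw [hb]; norm_num
        rw [haV, hbV, hcV]; decide
      · have haV : a = 8 := by rw [haN, hS]; norm_num
        have hbV : b = 9 := by rw [hb]; norm_num
        rw [haV, hbV, hcV]; decide
      · have haV : a = 242 := by rw [haN, hS]; norm_num
        have hbV : b = 243 := by rw [hb]; norm_num
        rw [haV, hbV, hcV]; decide
end
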